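/- arXiv:2401.12793 — 7 statements merged into one kernel-verified Lean document; each statement's English description precedes it below -/
import Mathlib

section
/- Let I be a finite family of nonempty intervals of a finite linear order such that the intersection of every nonempty subfamily of I is either empty or an interval of odd cardinality (an 'odd intersection interval set'). Let G_I be the intersection graph of I (one vertex per interval, two vertices adjacent iff the corresponding intervals intersect). Then for every connected component of G_I, the union of the intervals corresponding to the vertices of that component has odd cardinality. -/
open SimpleGraph
def intersectionGraph {ι : Type*} {α : Type*} (I : ι → Set α) : SimpleGraph ι where
  Adj i j := i ≠ j ∧ (I i ∩ I j).Nonempty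
  symm := by
    constructor
    rintro i j ⟨hne, x, hx₁, hx₂⟩
    exact ⟨hne.symm, x, hx₂, hx₁⟩
  loopless := ⟨fun i h => h.1 rfl⟩

open Classical in
theorem key_odd_union
    {α : Type*} [Fintype α] [LinearOrder α] {ι : Type*} [Fintype ι]
    (I : ι → Set α)
    (hne : ∀ i, (I i).Nonempty)
    (hInt : ∀ i, (I i).OrdConnected)
    (hodd : ∀ t : Finset ι, t.Nonempty →
      (⋂ i ∈ t, I i) = ∅ ∨ Odd (⋂ i ∈ t, I i).ncard) :
    ∀ S : Finset ι, S.Nonempty →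
      (∀ A ⊆ S, A.Nonempty → (S \ A).Nonempty →
        ((⋃ i ∈ A, I i) ∩ ⋃ i ∈ S \ A, I i).Nonempty) →
      Odd (⋃ i ∈ S, I i).ncard := by
  -- single-interval oddness
  have hoddI : ∀ i, Odd (I i).ncard := by
    intro i
    have h := hodd {i} ⟨i, Finset.mem_singleton_self i⟩
    simp only [Finset.mem_singleton, Set.iInter_iInter_eq_left] at h
    rcases h with h | h
    · exact absurd h (Set.nonempty_iff_ne_empty.mp (hne i))
    · exact h
  -- right endpoints
  have hRex : ∀ i, ∃ r ∈ I i, ∀ x ∈ I i, x ≤ r := by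
    intro i
    obtain ⟨r, hr, hmax⟩ := Set.exists_max_image (I i) id (Set.toFinite _) (hne i)
    exact ⟨r, hr, hmax⟩
  choose R hRmem hRmax using hRex
  have hLex : ∀ i, ∃ l ∈ I i, ∀ x ∈ I i, l ≤ x := by
    intro i
    obtain ⟨l, hl, hmin⟩ := Set.exists_min_image (I i) id (Set.toFinite _) (hne i)
    exact ⟨l, hl, hmin⟩
  choose L hLmem hLmin using hLex
  intro S
  induction S using Finset.strongInduction with
  | _ S ih =>
  intro hS hconn
  by_cases hcard : S.card = 1
  · obtain ⟨i, rfl⟩ := Finset.card_eq_one.mp hcard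
    simpa using hoddI i
  · have hcard2 : 2 ≤ S.card := by
      have := Finset.card_pos.mpr hS
      omega
    -- pick v with minimal right endpoint
    obtain ⟨v, hvS, hvmin⟩ := Finset.exists_min_image S R hS
    set r := R v with hr
    set S' : Finset ι := S \ {v} with hS'
    have hvS' : v ∉ S' := by simp [hS']
    have hS'sub : S' ⊆ S := Finset.sdiff_subset
    have hS'card : S'.card = S.card - 1 := by
      rw [hS', Finset.sdiff_singleton_eq_erase, Finset.card_erase_of_mem hvS]
    have hS'ne : S'.Nonempty := by
      rw [← Finset.card_pos, hS'card]; omega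
    -- neighbors of v contain r
    have hnbr : ∀ j ∈ S, (I v ∩ I j).Nonempty → r ∈ I j := by
      rintro j hj ⟨x, hxv, hxj⟩
      have h1 : x ≤ r := hRmax v x hxv
      have h2 : r ≤ R j := hvmin j hj
      exact (hInt j).out hxj (hRmem j) ⟨h1, h2⟩
    -- v has a neighbor in S'
    have hvsub : {v} ⊆ S := Finset.singleton_subset_iff.mpr hvS
    obtain ⟨x, hx1, hx2⟩ := hconn {v} hvsub ⟨v, Finset.mem_singleton_self v⟩ hS'ne
    simp only [Finset.mem_singleton, Set.mem_iUnion, exists_prop] at hx1 hx2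
    obtain ⟨j₀, hj₀, hxj₀⟩ := hx2
    have hxv : x ∈ I v := by
      rcases hx1 with ⟨i, hi, hxi⟩
      exact hi ▸ hxi
    -- the set of neighbors containing r
    set N : Finset ι := S'.filter (fun j => r ∈ I j) with hN
    have hNne : N.Nonempty := by
      refine ⟨j₀, Finset.mem_filter.mpr ⟨hj₀, hnbr j₀ (hS'sub hj₀) ⟨x, hxv, hxj₀⟩⟩⟩
    obtain ⟨js, hjsN, hjsmin⟩ := Finset.exists_min_image N L hNne
    have hjsS' : js ∈ S' := (Finset.mem_filter.mp hjsN).1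
    have hrjs : r ∈ I js := (Finset.mem_filter.mp hjsN).2
    have hvne : v ≠ js := fun h => hvS' (h ▸ hjsS')
    -- the key intersection identity
    have hinter : I v ∩ (⋃ i ∈ S', I i) = I v ∩ I js := by
      apply Set.Subset.antisymm
      · rintro x ⟨hxv, hxU⟩
        rw [Set.mem_iUnion₂] at hxU
        obtain ⟨j, hj, hxj⟩ := hxU
        have hrj : r ∈ I j := hnbr j (hS'sub hj) ⟨x, hxv, hxj⟩
        have hjN : j ∈ N := Finset.mem_filter.mpr ⟨hj, hrj⟩
        have h1 : L js ≤ x := le_trans (hjsmin j hjN) (hLmin j x hxj)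
        have h2 : x ≤ r := hRmax v x hxv
        exact ⟨hxv, (hInt js).out (hLmem js) hrjs ⟨h1, h2⟩⟩
      · rintro x ⟨hxv, hxjs⟩
        exact ⟨hxv, Set.mem_biUnion hjsS' hxjs⟩
    -- oddness of I v ∩ I js
    have hoddvj : Odd (I v ∩ I js).ncard := by
      have h := hodd {v, js} ⟨v, by simp⟩
      have heq : (⋂ i ∈ ({v, js} : Finset ι), I i) = I v ∩ I js := by
        simp [Set.iInter_iInter_eq_left]
      rw [heq] at h
      rcases h with h | h
      · exact absurd h (Set.nonempty_iff_ne_empty.mp ⟨r, hRmem v, hrjs⟩)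
      · exact h
    -- connectivity of S'
    have hconn' : ∀ A ⊆ S', A.Nonempty → (S' \ A).Nonempty →
        ((⋃ i ∈ A, I i) ∩ ⋃ i ∈ S' \ A, I i).Nonempty := by
      intro A hA hAne hAcne
      have hAS : A ⊆ S := hA.trans hS'sub
      have hvA : v ∉ A := fun h => hvS' (hA h)
      have hSA : (S \ A).Nonempty := by
        obtain ⟨b, hb⟩ := hAcne
        exact ⟨b, Finset.mem_sdiff.mpr ⟨hS'sub (Finset.mem_sdiff.mp hb).1,
          (Finset.mem_sdiff.mp hb).2⟩⟩
      -- first application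
      obtain ⟨x, hxA, hxC⟩ := hconn A hAS hAne hSA
      rw [Set.mem_iUnion₂] at hxC
      obtain ⟨k, hk, hxk⟩ := hxC
      by_cases hkv : k = v
      · -- x ∈ I v, so r ∈ ⋃ A
        rw [hkv] at hxk
        rw [Set.mem_iUnion₂] at hxA
        obtain ⟨a, ha, hxa⟩ := hxA
        have hrA : r ∈ ⋃ i ∈ A, I i :=
          Set.mem_biUnion ha (hnbr a (hAS ha) ⟨x, hxk, hxa⟩)
        -- second application with B = S' \ A
        set B : Finset ι := S' \ A with hB
        have hBS : B ⊆ S := Finset.sdiff_subset.trans hS'sub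
        have hSB : (S \ B).Nonempty := ⟨v, Finset.mem_sdiff.mpr ⟨hvS,
          fun h => hvS' (Finset.mem_sdiff.mp h).1⟩⟩
        obtain ⟨y, hyB, hyC⟩ := hconn B hBS hAcne hSB
        rw [Set.mem_iUnion₂] at hyC
        obtain ⟨m, hm, hym⟩ := hyC
        by_cases hmv : m = v
        · rw [hmv] at hym
          rw [Set.mem_iUnion₂] at hyB
          obtain ⟨b, hb, hyb⟩ := hyB
          have hrB : r ∈ ⋃ i ∈ B, I i :=
            Set.mem_biUnion hb (hnbr b (hBS hb) ⟨y, hym, hyb⟩)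
          exact ⟨r, hrA, hrB⟩
        · -- m ∈ A, so y witnesses
          have hmS : m ∈ S := (Finset.mem_sdiff.mp hm).1
          have hmB : m ∉ B := (Finset.mem_sdiff.mp hm).2
          have hmA : m ∈ A := by
            by_contra hmA
            exact hmB (Finset.mem_sdiff.mpr ⟨Finset.mem_sdiff.mpr
              ⟨hmS, by simp [hmv]⟩, hmA⟩)
          exact ⟨y, Set.mem_biUnion hmA hym, hyB⟩
      · have hkS' : k ∈ S' \ A := by
          have hkS : k ∈ S := (Finset.mem_sdiff.mp hk).1
          have hkA : k ∉ A := (Finset.mem_sdiff.mp hk).2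
          exact Finset.mem_sdiff.mpr ⟨Finset.mem_sdiff.mpr ⟨hkS, by simp [hkv]⟩, hkA⟩
        exact ⟨x, hxA, Set.mem_biUnion hkS' hxk⟩
    -- induction
    have hS'ssub : S' ⊂ S := Finset.sdiff_ssubset (Finset.singleton_subset_iff.mpr hvS) (Finset.singleton_nonempty v)
    have hu : Odd (⋃ i ∈ S', I i).ncard := ih S' hS'ssub hS'ne hconn'
    -- cardinality computation
    have hunion : (⋃ i ∈ S, I i) = I v ∪ ⋃ i ∈ S', I i := by
      conv_lhs => rw [show S = insert v S' by
        rw [hS', Finset.sdiff_singleton_eq_erase, Finset.insert_erase hvS]]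
      rw [Finset.set_biUnion_insert]
    have hcardeq := Set.ncard_union_add_ncard_inter (I v) (⋃ i ∈ S', I i)
      (Set.toFinite _) (Set.toFinite _)
    rw [hinter] at hcardeq
    rw [hunion]
    obtain ⟨a, ha⟩ := hoddI v
    obtain ⟨b, hb⟩ := hu
    obtain ⟨c, hc⟩ := hoddvj
    rw [ha, hb, hc] at hcardeq
    exact ⟨a + b - c, by omega⟩

theorem odd_union_test : True := trivial

/-- Let `I` be a finite family of nonempty intervals of a finite linear
order such that the intersection of every nonempty subfamily is either empty or an
interval of odd cardinality.  Then, for every connected component of the intersection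
graph of `I`, the union of the intervals corresponding to the vertices of that
component has odd cardinality. -/
theorem odd_union_of_oddIntersectionIntervalSet
    {α : Type*} [Fintype α] [LinearOrder α] {ι : Type*} [Fintype ι]
    (I : ι → Set α)
    (hne : ∀ i, (I i).Nonempty)
    (hInt : ∀ i, (I i).OrdConnected)
    (hodd : ∀ t : Finset ι, t.Nonempty →
      (⋂ i ∈ t, I i) = ∅ ∨ Odd (⋂ i ∈ t, I i).ncard) :
    ∀ c : (intersectionGraph I).ConnectedComponent,
      Odd (⋃ i ∈ {i : ι | (intersectionGraph I).connectedComponentMk i = c}, I i).ncard := by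
  classical
  intro c
  set S : Finset ι := {i : ι | (intersectionGraph I).connectedComponentMk i = c}.toFinset
    with hSdef
  have hmemS : ∀ i, i ∈ S ↔ (intersectionGraph I).connectedComponentMk i = c := by
    intro i; rw [hSdef, Set.mem_toFinset]; rfl
  have hcoe : (↑S : Set ι) = {i : ι | (intersectionGraph I).connectedComponentMk i = c} :=
    Set.coe_toFinset _
  rw [← hcoe, Finset.set_biUnion_coe]
  apply key_odd_union I hne hInt hodd
  · obtain ⟨i, hi⟩ := c.exists_rep
    exact ⟨i, (hmemS i).mpr hi⟩
  · intro A hA hAne hSAne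
    obtain ⟨a, ha⟩ := hAne
    obtain ⟨b, hb⟩ := hSAne
    have haC : (intersectionGraph I).connectedComponentMk a = c := (hmemS a).mp (hA ha)
    have hbC : (intersectionGraph I).connectedComponentMk b = c :=
      (hmemS b).mp (Finset.mem_sdiff.mp hb).1
    have hbA : b ∉ A := (Finset.mem_sdiff.mp hb).2
    have hreach : (intersectionGraph I).Reachable a b :=
      SimpleGraph.ConnectedComponent.exact (haC.trans hbC.symm)
    obtain ⟨p⟩ := hreach
    obtain ⟨d, hd, hdfst, hdsnd⟩ := p.exists_boundary_dart (↑A : Set ι)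
      (by exact_mod_cast ha) (by exact_mod_cast hbA)
    have hadj : (intersectionGraph I).Adj d.fst d.snd := d.adj
    obtain ⟨hne', x, hx1, hx2⟩ := hadj
    have hdfstA : d.fst ∈ A := by exact_mod_cast hdfst
    have hdsndA : d.snd ∉ A := by exact_mod_cast hdsnd
    have hdsndS : d.snd ∈ S := by
      rw [hmemS]
      have : (intersectionGraph I).connectedComponentMk d.fst = (intersectionGraph I).connectedComponentMk d.snd :=
        SimpleGraph.ConnectedComponent.sound d.adj.reachable
      rw [← this]
      exact (hmemS d.fst).mp (hA hdfstA)
    exact ⟨x, Set.mem_biUnion hdfstA hx1,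
      Set.mem_biUnion (Finset.mem_sdiff.mpr ⟨hdsndS, hdsndA⟩) hx2⟩
end

section
/- Let G be a simple graph and F a set of edges of G. If the contracted graph G/F contains a hole on h vertices, then G contains a hole on at least h vertices. -/
open SimpleGraph

universe u

variable {V : Type u}

/-- The clique number of a graph, as an extended natural number:
the supremum of the cardinalities of its (finite) cliques. -/
noncomputable def cliqueNumber (G : SimpleGraph V) : ℕ∞ :=
  ⨆ (t : Finset V) (_ : G.IsClique (t : Set V)), (t.card : ℕ∞)

/-- A graph is perfect if every induced subgraph has chromatic number equal
to its clique number. -/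
def IsPerfect (G : SimpleGraph V) : Prop :=
  ∀ s : Set V, (G.induce s).chromaticNumber = cliqueNumber (G.induce s)

/-- The contraction `G/F` of a set `F` of edges: vertices are the connected components
of the spanning subgraph `(V, F)`, two distinct components being adjacent iff `G` has
an edge between them. -/
def contractEdges (G : SimpleGraph V) (F : Set (Sym2 V)) :
    SimpleGraph (SimpleGraph.fromEdgeSet F).ConnectedComponent where
  Adj c d := c ≠ d ∧ ∃ x y : V,
      (SimpleGraph.fromEdgeSet F).connectedComponentMk x = c ∧
      (SimpleGraph.fromEdgeSet F).connectedComponentMk y = d ∧ G.Adj x y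
  symm := by
    constructor
    rintro c d ⟨hne, x, y, hx, hy, hxy⟩
    exact ⟨hne.symm, y, x, hy, hx, hxy.symm⟩
  loopless := ⟨fun c h => h.1 rfl⟩

/-- A graph is contraction perfect if the contraction of any set of its edges
yields a perfect graph. -/
def IsContractionPerfect (G : SimpleGraph V) : Prop :=
  ∀ F : Set (Sym2 V), F ⊆ G.edgeSet → IsPerfect (contractEdges G F)

/-- `G` contains a hole (induced cycle, `n ≥ 4`) on `n` vertices. -/
def HasHole (G : SimpleGraph V) (n : ℕ) : Prop :=
  4 ≤ n ∧ ∃ s : Set V, Nonempty (G.induce s ≃g cycleGraph n)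

/-- `G` contains an antihole (induced complement of a cycle, `n ≥ 4`) on `n` vertices. -/
def HasAntihole (G : SimpleGraph V) (n : ℕ) : Prop :=
  4 ≤ n ∧ ∃ s : Set V, Nonempty ((G.induce s)ᶜ ≃g cycleGraph n)

/-- `u`, `v` and `w 0, …, w (p-1)` (thought of as `w_1, …, w_p`) form an expanded antihole
in `G`: `uv` is an edge, the `w i` are distinct vertices different from `u` and `v`
inducing an antipath in this order, `u` is adjacent exactly to `w_2, …, w_{p-2}` among them,
and `v` is adjacent exactly to `w_3, …, w_{p-1}` among them. -/
def IsExpandedAntihole (G : SimpleGraph V) (u v : V) (p : ℕ) (w : Fin p → V) : Prop :=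
  6 ≤ p ∧ Even p ∧ G.Adj u v ∧ Function.Injective w ∧
  (∀ i, w i ≠ u) ∧ (∀ i, w i ≠ v) ∧
  (∀ i j, G.Adj (w i) (w j) ↔ (i ≠ j ∧ (i : ℕ) + 1 ≠ (j : ℕ) ∧ (j : ℕ) + 1 ≠ (i : ℕ))) ∧
  (∀ i, G.Adj u (w i) ↔ (1 ≤ (i : ℕ) ∧ (i : ℕ) ≤ p - 3)) ∧
  (∀ i, G.Adj v (w i) ↔ (2 ≤ (i : ℕ) ∧ (i : ℕ) ≤ p - 2))

/-- The contraction `G/uv` of a single edge `uv`: delete `u` and `v` and add a new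
vertex (here `none`) adjacent to every vertex of `N(u) ∪ N(v)`. -/
def contractOne (G : SimpleGraph V) (u v : V) :
    SimpleGraph (Option {x : V // x ≠ u ∧ x ≠ v}) where
  Adj a b :=
    match a, b with
    | some x, some y => G.Adj x.1 y.1
    | some x, none => G.Adj x.1 u ∨ G.Adj x.1 v
    | none, some y => G.Adj u y.1 ∨ G.Adj v y.1
    | none, none => False
  symm := by
    constructor
    rintro (_ | x) (_ | y) h
    · exact h
    · exact h.imp (fun h' => h'.symm) (fun h' => h'.symm)
    · exact h.imp (fun h' => h'.symm) (fun h' => h'.symm)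
    · exact h.symm
  loopless := by
    constructor
    rintro (_ | x) h
    · exact h
    · exact G.loopless.irrefl _ h

/-- The utter graph of `G`, on vertex set `V(G) ∪ E(G)`. -/
def utterGraph (G : SimpleGraph V) : SimpleGraph (V ⊕ G.edgeSet) where
  Adj a b :=
    match a, b with
    | Sum.inl x, Sum.inl y => G.Adj x y
    | Sum.inl x, Sum.inr e => x ∈ (e : Sym2 V) ∨ ∃ y ∈ (e : Sym2 V), G.Adj x y
    | Sum.inr e, Sum.inl x => x ∈ (e : Sym2 V) ∨ ∃ y ∈ (e : Sym2 V), G.Adj x y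
    | Sum.inr e, Sum.inr f => e ≠ f ∧
        ((∃ x, x ∈ (e : Sym2 V) ∧ x ∈ (f : Sym2 V)) ∨
          ∃ x ∈ (e : Sym2 V), ∃ y ∈ (f : Sym2 V), G.Adj x y)
  symm := by
    constructor
    rintro (x | e) (y | f) h
    · exact h.symm
    · exact h
    · exact h
    · exact ⟨h.1.symm, h.2.imp (fun ⟨x, hx⟩ => ⟨x, hx.2, hx.1⟩)
        (fun ⟨x, hx, y, hy, hxy⟩ => ⟨y, hy, x, hx, hxy.symm⟩)⟩
  loopless := by
    constructor
    rintro (x | e) h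
    · exact G.loopless.irrefl _ h
    · exact h.1 rfl

/-- A stable (independent) set: a set of pairwise nonadjacent vertices. -/
def IsStableSet (G : SimpleGraph V) (s : Set V) : Prop :=
  ∀ x ∈ s, ∀ y ∈ s, ¬G.Adj x y

/-- A co-2-plex: a set of vertices inducing a subgraph of maximum degree at most one. -/
def IsCo2Plex (G : SimpleGraph V) (S : Set V) : Prop :=
  ∀ x ∈ S, ∀ y ∈ S, ∀ z ∈ S, G.Adj x y → G.Adj x z → y = z

/-- The graph obtained from `G` by adding a true twin (`none`) of the vertex `v`. -/
def addTrueTwin (G : SimpleGraph V) (v : V) : SimpleGraph (Option V) where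
  Adj a b :=
    match a, b with
    | some x, some y => G.Adj x y
    | some x, none => x = v ∨ G.Adj x v
    | none, some y => y = v ∨ G.Adj y v
    | none, none => False
  symm := by constructor; rintro (_ | x) (_ | y) h <;> first | exact h | exact h.symm
  loopless := by
    constructor
    rintro (_ | x) h
    · exact h
    · exact G.loopless.irrefl _ h

/-- The graph obtained from `G` by adding a false twin (`none`) of the vertex `v`. -/
def addFalseTwin (G : SimpleGraph V) (v : V) : SimpleGraph (Option V) where
  Adj a b :=
    match a, b with
    | some x, some y => G.Adj x y
    | some x, none => G.Adj x v
    | none, some y => G.Adj y v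
    | none, none => False
  symm := by constructor; rintro (_ | x) (_ | y) h <;> first | exact h | exact h.symm
  loopless := by
    constructor
    rintro (_ | x) h
    · exact h
    · exact G.loopless.irrefl _ h

namespace HoleLift

lemma cg_adj {k : ℕ} [NeZero k] (hk : 2 ≤ k) (u v : Fin k) :
    (cycleGraph k).Adj u v ↔ (v = u + 1 ∨ u = v + 1) := by
  rcases k with _ | _ | k'
  · omega
  · omega
  · rw [cycleGraph_adj]
    constructor
    · rintro (h | h)
      · exact Or.inr (eq_add_of_sub_eq' h)
      · exact Or.inl (eq_add_of_sub_eq' h)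
    · rintro (rfl | rfl)
      · exact Or.inr (add_sub_cancel_left u 1)
      · exact Or.inl (add_sub_cancel_left v 1)

lemma hasHole_of_fun (G : SimpleGraph V) {k : ℕ} [NeZero k] (hk : 4 ≤ k) (f : Fin k → V)
    (hinj : Function.Injective f)
    (hadj : ∀ i j, G.Adj (f i) (f j) ↔ (j = i + 1 ∨ i = j + 1)) : HasHole G k := by
  refine ⟨hk, Set.range f, ⟨?_⟩⟩
  refine ⟨(Equiv.ofInjective f hinj).symm, ?_⟩
  intro a b
  rw [comap_adj, Function.Embedding.coe_subtype, cg_adj (by omega), ← hadj]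
  rw [Equiv.apply_ofInjective_symm hinj, Equiv.apply_ofInjective_symm hinj]


lemma fin_add_one_val {n : ℕ} [NeZero n] (i : Fin n) :
    ((i + 1 : Fin n) : ℕ) = ((i : ℕ) + 1) % n := by
  rw [Fin.val_add, Fin.val_one']
  conv_rhs => rw [Nat.add_mod, Nat.mod_eq_of_lt i.isLt]

lemma fin_add_one_val_of_lt {n : ℕ} [NeZero n] {i : Fin n} (h : (i : ℕ) + 1 < n) :
    ((i + 1 : Fin n) : ℕ) = (i : ℕ) + 1 := by
  rw [fin_add_one_val, Nat.mod_eq_of_lt h]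

lemma fin_add_one_val_of_eq {n : ℕ} [NeZero n] {i : Fin n} (h : (i : ℕ) + 1 = n) :
    ((i + 1 : Fin n) : ℕ) = 0 := by
  rw [fin_add_one_val, h, Nat.mod_self]

section Offsets

variable {n : ℕ}

/-- Offsets of the blocks: block `i` occupies positions `offF ℓ i, …, offF ℓ i + ℓ i`. -/
def offF (ℓ : Fin n → ℕ) : ℕ → ℕ :=
  fun m => ∑ j ∈ Finset.range m, (if hj : j < n then ℓ ⟨j, hj⟩ + 1 else 1)

lemma offF_zero (ℓ : Fin n → ℕ) : offF ℓ 0 = 0 := by simp [offF]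

lemma offF_succ (ℓ : Fin n → ℕ) (m : ℕ) :
    offF ℓ (m + 1) = offF ℓ m + (if hj : m < n then ℓ ⟨m, hj⟩ + 1 else 1) := by
  simp [offF, Finset.sum_range_succ]

lemma offF_succ_fin' (ℓ : Fin n → ℕ) (i : ℕ) (hi : i < n) :
    offF ℓ (i + 1) = offF ℓ i + (ℓ ⟨i, hi⟩ + 1) := by
  rw [offF_succ, dif_pos hi]

lemma offF_succ_fin (ℓ : Fin n → ℕ) (i : Fin n) :
    offF ℓ ((i : ℕ) + 1) = offF ℓ i + (ℓ i + 1) := by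
  rw [offF_succ, dif_pos i.isLt, Fin.eta]

lemma offF_lt_succ (ℓ : Fin n → ℕ) (m : ℕ) : offF ℓ m < offF ℓ (m + 1) := by
  rw [offF_succ]; split <;> omega

lemma offF_strictMono (ℓ : Fin n → ℕ) : StrictMono (offF ℓ) :=
  strictMono_nat_of_lt_succ (offF_lt_succ ℓ)

lemma offF_n (ℓ : Fin n → ℕ) : offF ℓ n = ∑ i : Fin n, (ℓ i + 1) := by
  rw [offF, ← Fin.sum_univ_eq_sum_range]
  exact Finset.sum_congr rfl fun i _ => by rw [dif_pos i.isLt, Fin.eta]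

lemma exists_block (ℓ : Fin n → ℕ) :
    ∀ N m, m < offF ℓ N → ∃ i, i < N ∧ offF ℓ i ≤ m ∧ m < offF ℓ (i + 1) := by
  intro N
  induction N with
  | zero => intro m hm; rw [offF_zero] at hm; omega
  | succ N ih =>
    intro m hm
    by_cases h : m < offF ℓ N
    · obtain ⟨i, hi, h1, h2⟩ := ih m h
      exact ⟨i, by omega, h1, h2⟩
    · exact ⟨N, by omega, by omega, hm⟩

end Offsets

section Cfg

variable {n : ℕ} {C : Type*}

/-- A configuration: for each vertex `c i` of the hole in `G/F`, a path
`Q i 0, …, Q i (ℓ i)` inside the component `c i`, such that consecutive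
paths are linked by an edge of `G`. -/
structure Cfg (G : SimpleGraph V) (κ : V → C) (c : Fin n → C)
    (ℓ : Fin n → ℕ) (Q : Fin n → ℕ → V) [NeZero n] : Prop where
  comp : ∀ i t, t ≤ ℓ i → κ (Q i t) = c i
  inj : ∀ i s t, s ≤ ℓ i → t ≤ ℓ i → Q i s = Q i t → s = t
  chain : ∀ i t, t < ℓ i → G.Adj (Q i t) (Q i (t + 1))
  link : ∀ i, G.Adj (Q i (ℓ i)) (Q (i + 1) 0)

lemma hasHole_of_cfg [NeZero n] (hn : 4 ≤ n) {G : SimpleGraph V} {κ : V → C} {c : Fin n → C}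
    {ℓ : Fin n → ℕ} {Q : Fin n → ℕ → V} (cfg : Cfg G κ c ℓ Q)
    (hcinj : Function.Injective c)
    (h5 : ∀ i s t, s ≤ ℓ i → t ≤ ℓ i → G.Adj (Q i s) (Q i t) → t = s + 1 ∨ s = t + 1)
    (h6 : ∀ i s t, s ≤ ℓ i → t ≤ ℓ (i + 1) → G.Adj (Q i s) (Q (i + 1) t) → s = ℓ i ∧ t = 0)
    (hfar : ∀ i j : Fin n, ∀ s t, s ≤ ℓ i → t ≤ ℓ j → G.Adj (Q i s) (Q j t) →
      j = i ∨ j = i + 1 ∨ i = j + 1) :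
    ∃ k, n ≤ k ∧ HasHole G k := by
  classical
  set k := offF ℓ n with hkdef
  have hkn : n ≤ k := by
    rw [hkdef, offF_n]
    calc n = ∑ _i : Fin n, 1 := by simp
    _ ≤ ∑ i : Fin n, (ℓ i + 1) := Finset.sum_le_sum fun i _ => by omega
  have hk4 : 4 ≤ k := le_trans hn hkn
  haveI : NeZero k := ⟨by omega⟩
  -- decomposition of global indices
  have hdec : ∀ m : Fin k, ∃ i : Fin n, ∃ t : ℕ, t ≤ ℓ i ∧ (m : ℕ) = offF ℓ i + t := by
    intro m
    obtain ⟨i, hiN, h1, h2⟩ := exists_block ℓ n m m.isLt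
    refine ⟨⟨i, hiN⟩, (m : ℕ) - offF ℓ i, ?_, ?_⟩
    · have := offF_succ_fin' ℓ i hiN
      omega
    · simp only [Fin.val_mk]
      omega
  choose bi bt hbt hbeq using hdec
  -- uniqueness of the decomposition
  have uniq : ∀ (i : Fin n) (t : ℕ), t ≤ ℓ i → ∀ (i' : Fin n) (t' : ℕ), t' ≤ ℓ i' →
      offF ℓ i + t = offF ℓ i' + t' → i = i' ∧ t = t' := by
    intro i t ht i' t' ht' heq
    have hii' : i = i' := by
      by_contra hne
      rcases lt_or_gt_of_ne (fun h : (i : ℕ) = (i' : ℕ) => hne (Fin.ext h)) with hlt | hlt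
      · have h1 := offF_succ_fin ℓ i
        have h2 := (offF_strictMono ℓ).monotone (show (i : ℕ) + 1 ≤ (i' : ℕ) by omega)
        omega
      · have h1 := offF_succ_fin ℓ i'
        have h2 := (offF_strictMono ℓ).monotone (show (i' : ℕ) + 1 ≤ (i : ℕ) by omega)
        omega
    subst hii'
    exact ⟨rfl, by omega⟩
  have hbound : ∀ (i : Fin n) (t : ℕ), t ≤ ℓ i → offF ℓ i + t < k := by
    intro i t ht
    have h1 := offF_succ_fin ℓ i
    have h2 := (offF_strictMono ℓ).monotone (show (i : ℕ) + 1 ≤ n from i.isLt)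
    omega
  -- characterize the decomposition of `m + 1`
  have succ_dec : ∀ m : Fin k,
      (bi (m + 1) = bi m ∧ bt m < ℓ (bi m) ∧ bt (m + 1) = bt m + 1) ∨
      (bt m = ℓ (bi m) ∧ bi (m + 1) = bi m + 1 ∧ bt (m + 1) = 0) := by
    intro m
    have hm := hbeq m
    have hm1 := hbeq (m + 1)
    have hmlt := m.isLt
    have hval : ((m + 1 : Fin k) : ℕ) = ((m : ℕ) + 1) % k := fin_add_one_val m
    have hval2 : ((m + 1 : Fin k) : ℕ) = (m : ℕ) + 1 ∨
        ((m : ℕ) + 1 = k ∧ ((m + 1 : Fin k) : ℕ) = 0) := by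
      by_cases hc : (m : ℕ) + 1 = k
      · exact Or.inr ⟨hc, by rw [hval, hc, Nat.mod_self]⟩
      · exact Or.inl (by rw [hval, Nat.mod_eq_of_lt (by omega)])
    by_cases hcase : bt m < ℓ (bi m)
    · left
      have hlt : (m : ℕ) + 1 < k := by
        have := hbound (bi m) (bt m + 1) (by omega); omega
      have hts : ((m + 1 : Fin k) : ℕ) = (m : ℕ) + 1 := by
        rcases hval2 with h | ⟨h1, h2⟩
        · exact h
        · omega
      have := uniq (bi (m + 1)) (bt (m + 1)) (hbt _) (bi m) (bt m + 1) (by omega) (by omega)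
      exact ⟨this.1, hcase, this.2⟩
    · right
      have hbtm : bt m = ℓ (bi m) := le_antisymm (hbt m) (by omega)
      have hoff : (m : ℕ) + 1 = offF ℓ ((bi m : ℕ) + 1) := by
        rw [offF_succ_fin]; omega
      refine ⟨hbtm, ?_⟩
      by_cases hlast : (bi m : ℕ) + 1 < n
      · have hbd := hbound ⟨(bi m : ℕ) + 1, hlast⟩ 0 (by omega)
        simp only [Fin.val_mk] at hbd
        have hlt : (m : ℕ) + 1 < k := by omega
        have hts : ((m + 1 : Fin k) : ℕ) = (m : ℕ) + 1 := by
          rcases hval2 with h | ⟨h1, h2⟩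
          · exact h
          · omega
        have := uniq (bi (m + 1)) (bt (m + 1)) (hbt _) ⟨(bi m : ℕ) + 1, hlast⟩ 0 (by omega)
          (by simp only [Fin.val_mk]; omega)
        refine ⟨?_, this.2⟩
        rw [this.1]
        apply Fin.ext
        simp only [Fin.val_mk]
        rw [fin_add_one_val_of_lt hlast]
      · have hbiN : (bi m : ℕ) + 1 = n := by have := (bi m).isLt; omega
        have hmk : (m : ℕ) + 1 = k := by rw [hoff, hbiN]
        have hval0 : ((m + 1 : Fin k) : ℕ) = 0 := by
          rcases hval2 with h | ⟨h1, h2⟩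
          · have := (m + 1 : Fin k).isLt
            omega
          · exact h2
        have := uniq (bi (m + 1)) (bt (m + 1)) (hbt _) ⟨0, by omega⟩ 0 (by omega)
          (by simp only [Fin.val_mk, offF_zero]; omega)
        refine ⟨?_, this.2⟩
        rw [this.1]
        apply Fin.ext
        simp only [Fin.val_mk]
        rw [fin_add_one_val_of_eq hbiN]
  -- `m` is determined by its decomposition
  have ext_dec : ∀ m m' : Fin k, bi m = bi m' → bt m = bt m' → m = m' := by
    intro m m' h1 h2
    apply Fin.ext
    rw [hbeq m, hbeq m', h1, h2]
  have step_iff : ∀ m m' : Fin k, m' = m + 1 ↔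
      ((bi m' = bi m ∧ bt m < ℓ (bi m) ∧ bt m' = bt m + 1) ∨
       (bt m = ℓ (bi m) ∧ bi m' = bi m + 1 ∧ bt m' = 0)) := by
    intro m m'
    constructor
    · rintro rfl; exact succ_dec m
    · intro hrhs
      rcases succ_dec m with ⟨e1, e2, e3⟩ | ⟨e1, e2, e3⟩
      · rcases hrhs with ⟨f1, f2, f3⟩ | ⟨f1, f2, f3⟩
        · exact ext_dec m' (m + 1) (by rw [f1, e1]) (by rw [f3, e3])
        · omega
      · rcases hrhs with ⟨f1, f2, f3⟩ | ⟨f1, f2, f3⟩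
        · omega
        · exact ext_dec m' (m + 1) (by rw [f2, e2]) (by rw [f3, e3])
  -- the global cyclic sequence
  set f : Fin k → V := fun m => Q (bi m) (bt m) with hfdef
  have hbij : ∀ m m' : Fin k, bi m = bi m' → Q (bi m) (bt m) = Q (bi m') (bt m') → m = m' := by
    intro m m' h1 h2
    rw [← h1] at h2
    exact ext_dec m m' h1 (cfg.inj (bi m) _ _ (hbt m) (h1 ▸ hbt m') h2)
  have hinj : Function.Injective f := by
    intro m m' h
    simp only [hfdef] at h
    have hbi : bi m = bi m' := by
      apply hcinj
      rw [← cfg.comp (bi m) (bt m) (hbt m), ← cfg.comp (bi m') (bt m') (hbt m'), h]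
    exact hbij m m' hbi h
  have hadj : ∀ m m' : Fin k, G.Adj (f m) (f m') ↔ (m' = m + 1 ∨ m = m' + 1) := by
    intro m m'
    constructor
    · intro hGadj
      simp only [hfdef] at hGadj
      rcases hfar (bi m) (bi m') (bt m) (bt m') (hbt m) (hbt m') hGadj with hc | hc | hc
      · -- same block
        rcases h5 (bi m) (bt m) (bt m') (hbt m) (hc ▸ hbt m') (hc ▸ hGadj)
          with h' | h'
        · left
          rw [step_iff]
          refine Or.inl ⟨hc, ?_, h'⟩
          have := hc ▸ hbt m'
          omega
        · right
          rw [step_iff]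
          refine Or.inl ⟨hc.symm, ?_, h'⟩
          rw [hc]
          have := hbt m
          omega
      · -- next block
        left
        rw [step_iff]
        have h' := h6 (bi m) (bt m) (bt m') (hbt m) (hc ▸ hbt m') (hc ▸ hGadj)
        exact Or.inr ⟨h'.1, hc, h'.2⟩
      · -- previous block
        right
        rw [step_iff]
        have h' := h6 (bi m') (bt m') (bt m) (hbt m') (hc ▸ hbt m) (hc ▸ hGadj.symm)
        exact Or.inr ⟨h'.1, hc, h'.2⟩
    · intro hc
      have key : ∀ a : Fin k, G.Adj (f a) (f (a + 1)) := by
        intro a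
        simp only [hfdef]
        rcases succ_dec a with ⟨e1, e2, e3⟩ | ⟨e1, e2, e3⟩
        · rw [e1, e3]; exact cfg.chain (bi a) (bt a) e2
        · rw [e2, e3, e1]; exact cfg.link (bi a)
      rcases hc with rfl | rfl
      · exact key m
      · exact (key m').symm
  exact ⟨k, hkn, hasHole_of_fun G hk4 f hinj hadj⟩


lemma fin_succ_ne {n : ℕ} [NeZero n] (hn : 2 ≤ n) (i : Fin n) : i + 1 ≠ i := by
  intro he
  have hv := congrArg Fin.val he
  rw [fin_add_one_val] at hv
  have hi := i.isLt
  rcases Nat.lt_or_ge ((i : ℕ) + 1) n with hlt | hge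
  · rw [Nat.mod_eq_of_lt hlt] at hv; omega
  · have he2 : (i : ℕ) + 1 = n := by omega
    rw [he2, Nat.mod_self] at hv; omega

lemma fin_succ_succ_ne {n : ℕ} [NeZero n] (hn : 3 ≤ n) (i : Fin n) : i + 1 + 1 ≠ i := by
  intro he
  rw [add_assoc] at he
  have h2 : (1 + 1 : Fin n) = 0 := by
    have := congrArg (fun x => x - i) he
    simpa [add_comm, add_sub_cancel_right] using this
  have hv := congrArg Fin.val h2
  rw [Fin.val_add, Fin.val_one'] at hv
  have h1 : 1 % n = 1 := Nat.mod_eq_of_lt (by omega)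
  rw [h1, Nat.mod_eq_of_lt (by omega)] at hv
  simp at hv

lemma fin_add_right_cancel {n : ℕ} [NeZero n] {i j : Fin n} (h : i + 1 = j + 1) : i = j := by
  have := congrArg (fun x => x - 1) h
  simpa [add_sub_cancel_right] using this

section Minimal

variable {n : ℕ} {C : Type*} [NeZero n] {G : SimpleGraph V} {κ : V → C} {c : Fin n → C}
  {ℓ : Fin n → ℕ} {Q : Fin n → ℕ → V}

/-- No chords within a block, for a minimal configuration. -/
lemma cfg_same_block (hn : 4 ≤ n) (cfg : Cfg G κ c ℓ Q)
    (hmin : ∀ (ℓ' : Fin n → ℕ) (Q' : Fin n → ℕ → V), Cfg G κ c ℓ' Q' →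
      ∑ j, ℓ j ≤ ∑ j, ℓ' j)
    (i : Fin n) (s t : ℕ) (hs : s ≤ ℓ i) (ht : t ≤ ℓ i) (hadj : G.Adj (Q i s) (Q i t)) :
    t = s + 1 ∨ s = t + 1 := by
  classical
  -- reduce to the case `s < t`
  suffices key : ∀ s t : ℕ, s ≤ ℓ i → t ≤ ℓ i → s < t → G.Adj (Q i s) (Q i t) → t = s + 1 by
    rcases Nat.lt_trichotomy s t with hlt | rfl | hlt
    · exact Or.inl (key s t hs ht hlt hadj)
    · exact absurd hadj (G.loopless.irrefl _)
    · exact Or.inr (key t s ht hs hlt hadj.symm)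
  clear hs ht hadj s t
  intro s t hs ht hst hadj
  by_contra hne
  have hd : s + 1 < t := by omega
  set d : ℕ := t - s - 1 with hddef
  have hd1 : 1 ≤ d := by omega
  have hdl : d < t := by omega
  set ℓ' : Fin n → ℕ := Function.update ℓ i (ℓ i - d) with hl'def
  set Q' : Fin n → ℕ → V :=
    Function.update Q i (fun m => if m ≤ s then Q i m else Q i (m + d)) with hq'def
  have hl'i : ℓ' i = ℓ i - d := by rw [hl'def, Function.update_self]
  have hq'i : Q' i = fun m => if m ≤ s then Q i m else Q i (m + d) := by
    rw [hq'def, Function.update_self]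
  have hl'ne : ∀ j, j ≠ i → ℓ' j = ℓ j := fun j hj => Function.update_of_ne hj _ _
  have hq'ne : ∀ j, j ≠ i → Q' j = Q j := fun j hj => Function.update_of_ne hj _ _
  have hli : ℓ i - d > s := by omega
  have hcfg' : Cfg G κ c ℓ' Q' := by
    constructor
    · -- comp
      intro j t' ht'
      by_cases hj : j = i
      · subst hj
        rw [hq'i]
        rw [hl'i] at ht'
        by_cases hc : t' ≤ s
        · simp only [if_pos hc]
          exact cfg.comp j t' (by omega)
        · simp only [if_neg hc]
          exact cfg.comp j (t' + d) (by omega)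
      · rw [hq'ne j hj]
        exact cfg.comp j t' (by rwa [hl'ne j hj] at ht')
    · -- inj
      intro j s' t' hs' ht' heq
      by_cases hj : j = i
      · subst hj
        rw [hq'i] at heq
        rw [hl'i] at hs' ht'
        simp only at heq
        by_cases hc1 : s' ≤ s <;> by_cases hc2 : t' ≤ s <;>
          simp only [if_pos, if_neg, hc1, hc2] at heq
        · exact cfg.inj j s' t' (by omega) (by omega) heq
        · have := cfg.inj j s' (t' + d) (by omega) (by omega) heq; omega
        · have := cfg.inj j (s' + d) t' (by omega) (by omega) heq; omega
        · have := cfg.inj j (s' + d) (t' + d) (by omega) (by omega) heq; omega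
      · rw [hq'ne j hj] at heq
        rw [hl'ne j hj] at hs' ht'
        exact cfg.inj j s' t' hs' ht' heq
    · -- chain
      intro j m hm
      by_cases hj : j = i
      · subst hj
        rw [hq'i]
        rw [hl'i] at hm
        simp only
        by_cases hc1 : m + 1 ≤ s
        · rw [if_pos (by omega), if_pos hc1]
          exact cfg.chain j m (by omega)
        · by_cases hc2 : m ≤ s
          · -- m = s
            have hms : m = s := by omega
            rw [if_pos hc2, if_neg hc1, hms]
            have he : s + 1 + d = t := by omega
            rw [he]
            exact hadj
          · rw [if_neg hc2, if_neg hc1]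
            have he : m + 1 + d = m + d + 1 := by omega
            rw [he]
            exact cfg.chain j (m + d) (by omega)
      · rw [hq'ne j hj]
        rw [hl'ne j hj] at hm
        exact cfg.chain j m hm
    · -- link
      intro j
      have hsn : j + 1 ≠ j := fin_succ_ne (by omega) j
      by_cases hj : j = i
      · subst hj
        rw [hq'i, hq'ne (j + 1) hsn, hl'i]
        simp only [if_neg (by omega : ¬ ℓ j - d ≤ s)]
        have he : ℓ j - d + d = ℓ j := by omega
        rw [he]
        exact cfg.link j
      · rw [hq'ne j hj, hl'ne j hj]
        by_cases hj1 : j + 1 = i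
        · rw [hj1, hq'i]
          simp only [if_pos (by omega : (0 : ℕ) ≤ s)]
          have := cfg.link j
          rwa [hj1] at this
        · rw [hq'ne (j + 1) hj1]
          exact cfg.link j
  have hlt : ∑ j, ℓ' j < ∑ j, ℓ j := by
    apply Finset.sum_lt_sum
    · intro j _
      by_cases hj : j = i
      · subst hj; rw [hl'i]; omega
      · rw [hl'ne j hj]
    · exact ⟨i, Finset.mem_univ i, by rw [hl'i]; omega⟩
  exact absurd (hmin ℓ' Q' hcfg') (by omega)

/-- Chords between consecutive blocks must be the linking edge, for a minimal configuration. -/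
lemma cfg_cross_block (hn : 4 ≤ n) (cfg : Cfg G κ c ℓ Q)
    (hmin : ∀ (ℓ' : Fin n → ℕ) (Q' : Fin n → ℕ → V), Cfg G κ c ℓ' Q' →
      ∑ j, ℓ j ≤ ∑ j, ℓ' j)
    (i : Fin n) (s t : ℕ) (hs : s ≤ ℓ i) (ht : t ≤ ℓ (i + 1))
    (hadj : G.Adj (Q i s) (Q (i + 1) t)) :
    s = ℓ i ∧ t = 0 := by
  classical
  by_contra hcon
  have hi1 : i + 1 ≠ i := fin_succ_ne (by omega) i
  have hi2 : i + 1 + 1 ≠ i := fin_succ_succ_ne (by omega) i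
  have hi3 : i + 1 + 1 ≠ i + 1 := fin_succ_ne (by omega) (i + 1)
  set ℓ' : Fin n → ℕ :=
    Function.update (Function.update ℓ i s) (i + 1) (ℓ (i + 1) - t) with hl'def
  set Q' : Fin n → ℕ → V := Function.update Q (i + 1) (fun m => Q (i + 1) (m + t)) with hq'def
  have hl'i : ℓ' i = s := by
    rw [hl'def, Function.update_of_ne (fun he => hi1 he.symm), Function.update_self]
  have hl'i1 : ℓ' (i + 1) = ℓ (i + 1) - t := by rw [hl'def, Function.update_self]
  have hl'ne : ∀ j, j ≠ i → j ≠ i + 1 → ℓ' j = ℓ j := by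
    intro j hj hj1
    rw [hl'def, Function.update_of_ne hj1, Function.update_of_ne hj]
  have hq'i1 : Q' (i + 1) = fun m => Q (i + 1) (m + t) := by rw [hq'def, Function.update_self]
  have hq'ne : ∀ j, j ≠ i + 1 → Q' j = Q j := fun j hj => Function.update_of_ne hj _ _
  have hcfg' : Cfg G κ c ℓ' Q' := by
    constructor
    · -- comp
      intro j t' ht'
      by_cases hj1 : j = i + 1
      · subst hj1
        rw [hq'i1]
        rw [hl'i1] at ht'
        exact cfg.comp _ (t' + t) (by omega)
      · rw [hq'ne j hj1]
        by_cases hj : j = i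
        · subst hj
          rw [hl'i] at ht'
          exact cfg.comp j t' (by omega)
        · rw [hl'ne j hj hj1] at ht'
          exact cfg.comp j t' ht'
    · -- inj
      intro j s' t' hs' ht' heq
      by_cases hj1 : j = i + 1
      · subst hj1
        rw [hq'i1] at heq
        rw [hl'i1] at hs' ht'
        simp only at heq
        have := cfg.inj _ (s' + t) (t' + t) (by omega) (by omega) heq
        omega
      · rw [hq'ne j hj1] at heq
        by_cases hj : j = i
        · subst hj
          rw [hl'i] at hs' ht'
          exact cfg.inj j s' t' (by omega) (by omega) heq
        · rw [hl'ne j hj hj1] at hs' ht'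
          exact cfg.inj j s' t' hs' ht' heq
    · -- chain
      intro j m hm
      by_cases hj1 : j = i + 1
      · subst hj1
        rw [hq'i1]
        rw [hl'i1] at hm
        simp only
        have he : m + 1 + t = m + t + 1 := by omega
        rw [he]
        exact cfg.chain _ (m + t) (by omega)
      · rw [hq'ne j hj1]
        by_cases hj : j = i
        · subst hj
          rw [hl'i] at hm
          exact cfg.chain j m (by omega)
        · rw [hl'ne j hj hj1] at hm
          exact cfg.chain j m hm
    · -- link
      intro j
      by_cases hj : j = i
      · subst hj
        rw [hq'ne j (fun he => hi1 he.symm), hl'i, hq'i1]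
        simp only [Nat.zero_add]
        exact hadj
      · by_cases hj1 : j = i + 1
        · subst hj1
          rw [hq'i1, hl'i1, hq'ne (i + 1 + 1) hi3]
          simp only
          have he : ℓ (i + 1) - t + t = ℓ (i + 1) := by omega
          rw [he]
          exact cfg.link (i + 1)
        · rw [hq'ne j hj1, hl'ne j hj hj1]
          by_cases hj2 : j + 1 = i + 1
          · exact absurd (fin_add_right_cancel hj2) hj
          · rw [hq'ne (j + 1) hj2]
            exact cfg.link j
  have hlt : ∑ j, ℓ' j < ∑ j, ℓ j := by
    apply Finset.sum_lt_sum
    · intro j _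
      by_cases hj1 : j = i + 1
      · subst hj1; rw [hl'i1]; omega
      · by_cases hj : j = i
        · subst hj; rw [hl'i]; omega
        · rw [hl'ne j hj hj1]
    · by_cases hc : s < ℓ i
      · exact ⟨i, Finset.mem_univ i, by rw [hl'i]; omega⟩
      · have ht0 : 0 < t := by omega
        exact ⟨i + 1, Finset.mem_univ (i + 1), by rw [hl'i1]; omega⟩
  exact absurd (hmin ℓ' Q' hcfg') (by omega)

end Minimal

end Cfg

section Walks

lemma getVert_inj_of_isPath {G : SimpleGraph V} {u v : V} (q : G.Walk u v) (hq : q.IsPath) :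
    ∀ s t, s ≤ q.length → t ≤ q.length → q.getVert s = q.getVert t → s = t := by
  induction q with
  | nil => intro s t hs ht _; simp only [SimpleGraph.Walk.length_nil] at hs ht; omega
  | cons h p ih =>
    rw [SimpleGraph.Walk.cons_isPath_iff] at hq
    intro s t hs ht heq
    rw [SimpleGraph.Walk.length_cons] at hs ht
    match s, t with
    | 0, 0 => rfl
    | 0, t' + 1 =>
      rw [SimpleGraph.Walk.getVert_zero, SimpleGraph.Walk.getVert_cons_succ] at heq
      exact absurd (SimpleGraph.Walk.mem_support_iff_exists_getVert.mpr
        ⟨t', heq.symm, by omega⟩) hq.2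
    | s' + 1, 0 =>
      rw [SimpleGraph.Walk.getVert_zero, SimpleGraph.Walk.getVert_cons_succ] at heq
      exact absurd (SimpleGraph.Walk.mem_support_iff_exists_getVert.mpr
        ⟨s', heq, by omega⟩) hq.2
    | s' + 1, t' + 1 =>
      rw [SimpleGraph.Walk.getVert_cons_succ, SimpleGraph.Walk.getVert_cons_succ] at heq
      have := ih hq.1 s' t' (by omega) (by omega) heq
      omega

/-- Existence of an initial configuration, from the hole in the contraction. -/
lemma exists_cfg {G : SimpleGraph V} {F : Set (Sym2 V)} (hF : F ⊆ G.edgeSet) {n : ℕ}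
    [NeZero n] (hn : 4 ≤ n) (c : Fin n → (fromEdgeSet F).ConnectedComponent)
    (hlink : ∀ i : Fin n, (contractEdges G F).Adj (c i) (c (i + 1))) :
    ∃ (ℓ : Fin n → ℕ) (Q : Fin n → ℕ → V),
      Cfg G (fromEdgeSet F).connectedComponentMk c ℓ Q := by
  classical
  have hFG : fromEdgeSet F ≤ G := by
    intro u v huv
    rw [fromEdgeSet_adj] at huv
    exact (G.mem_edgeSet).mp (hF huv.1)
  have hedge : ∀ i : Fin n, ∃ u w : V, (fromEdgeSet F).connectedComponentMk u = c i ∧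
      (fromEdgeSet F).connectedComponentMk w = c (i + 1) ∧ G.Adj u w :=
    fun i => (hlink i).2
  choose x y hx hy hxy using hedge
  have hreach : ∀ i : Fin n, (fromEdgeSet F).Reachable (y (i - 1)) (x i) := by
    intro i
    apply SimpleGraph.ConnectedComponent.exact
    rw [hy (i - 1), hx, sub_add_cancel]
  have hpaths : ∀ i : Fin n, ∃ (L : ℕ) (P : ℕ → V),
      P 0 = y (i - 1) ∧ P L = x i ∧
      (∀ t, t ≤ L → (fromEdgeSet F).connectedComponentMk (P t) =
        (fromEdgeSet F).connectedComponentMk (y (i - 1))) ∧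
      (∀ s t, s ≤ L → t ≤ L → P s = P t → s = t) ∧
      (∀ t, t < L → G.Adj (P t) (P (t + 1))) := by
    intro i
    obtain ⟨w⟩ := hreach i
    let p := w.toPath
    refine ⟨p.val.length, p.val.getVert, SimpleGraph.Walk.getVert_zero _,
      SimpleGraph.Walk.getVert_length _, ?_, ?_, ?_⟩
    · intro t ht
      have hmem : p.val.getVert t ∈ p.val.support :=
        SimpleGraph.Walk.mem_support_iff_exists_getVert.mpr ⟨t, rfl, ht⟩
      exact (SimpleGraph.ConnectedComponent.sound ⟨p.val.takeUntil _ hmem⟩).symm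
    · exact getVert_inj_of_isPath p.val p.property
    · intro t htl
      exact hFG (SimpleGraph.Walk.adj_getVert_succ _ htl)
  choose L P h0 hL hcomp hinj hchain using hpaths
  refine ⟨L, P, ?_, hinj, hchain, ?_⟩
  · intro i t ht
    rw [hcomp i t ht, hy (i - 1), sub_add_cancel]
  · intro i
    rw [hL i, h0 (i + 1), add_sub_cancel_right]
    exact hxy i

end Walks

end HoleLift

/-- If `G/F` contains a hole on `h` vertices, then `G` contains a hole
on at least `h` vertices. -/


theorem hole_in_contraction {V : Type u} (G : SimpleGraph V) (F : Set (Sym2 V))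
    (hF : F ⊆ G.edgeSet) (h : ℕ) (hhole : HasHole (contractEdges G F) h) :
    ∃ k, h ≤ k ∧ HasHole G k := by
  classical
  obtain ⟨hn4, sset, ⟨φ⟩⟩ := hhole
  haveI : NeZero h := ⟨by omega⟩
  set κ := (fromEdgeSet F).connectedComponentMk with hκdef
  set c : Fin h → (fromEdgeSet F).ConnectedComponent :=
    fun i => ((φ.symm i : sset) : (fromEdgeSet F).ConnectedComponent) with hcdef
  have hcinj : Function.Injective c := by
    intro a b hab
    exact φ.symm.toEquiv.injective (Subtype.ext hab)
  have hcadj : ∀ i j : Fin h,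
      (contractEdges G F).Adj (c i) (c j) ↔ (cycleGraph h).Adj i j := by
    intro i j
    exact φ.symm.map_adj_iff
  have hlink : ∀ i : Fin h, (contractEdges G F).Adj (c i) (c (i + 1)) := by
    intro i
    rw [hcadj, HoleLift.cg_adj (by omega)]
    exact Or.inl rfl
  obtain ⟨ℓ, Q, cfg⟩ := HoleLift.exists_cfg hF hn4 c hlink
  have hex : ∃ N, ∃ ℓ' : Fin h → ℕ, ∃ Q' : Fin h → ℕ → V,
      HoleLift.Cfg G κ c ℓ' Q' ∧ ∑ j, ℓ' j = N := ⟨_, ℓ, Q, cfg, rfl⟩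
  obtain ⟨ℓm, Qm, cfgm, hNm⟩ := Nat.find_spec hex
  have hmin : ∀ (ℓ' : Fin h → ℕ) (Q' : Fin h → ℕ → V), HoleLift.Cfg G κ c ℓ' Q' →
      ∑ j, ℓm j ≤ ∑ j, ℓ' j := by
    intro ℓ' Q' hc'
    rw [hNm]
    by_contra hlt
    exact Nat.find_min hex (by omega) ⟨ℓ', Q', hc', rfl⟩
  have h5 := HoleLift.cfg_same_block hn4 cfgm hmin
  have h6 := HoleLift.cfg_cross_block hn4 cfgm hmin
  have hfar : ∀ i j : Fin h, ∀ s t : ℕ, s ≤ ℓm i → t ≤ ℓm j → G.Adj (Qm i s) (Qm j t) →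
      j = i ∨ j = i + 1 ∨ i = j + 1 := by
    intro i j s t hs ht hadj
    by_cases hij : j = i
    · exact Or.inl hij
    · right
      have hadjc : (contractEdges G F).Adj (c i) (c j) :=
        ⟨fun hcc => hij (hcinj hcc).symm, Qm i s, Qm j t, cfgm.comp i s hs,
          cfgm.comp j t ht, hadj⟩
      rw [hcadj, HoleLift.cg_adj (by omega)] at hadjc
      exact hadjc
  exact HoleLift.hasHole_of_cfg hn4 cfgm hcinj h5 h6 hfar
end

section
/- For every n ≥ 1, the complement of the path graph on n vertices (an antipath) is contraction perfect. -/
open SimpleGraph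

universe u

variable {V : Type u}

section AuxLinear

variable {W : Type u}

/-- Greedy pairing along the values of `f`: `pairedAux H f (t+1)` holds when the
vertices with values `t` and `t+1` exist, are nonadjacent, and the one at `t`
is not already paired. -/
def pairedAux (H : SimpleGraph W) (f : W → ℕ) : ℕ → Prop
  | 0 => False
  | (t + 1) => (∃ w w' : W, f w = t ∧ f w' = t + 1 ∧ ¬H.Adj w w') ∧ ¬ pairedAux H f t

lemma pairedAux_elim {H : SimpleGraph W} {f : W → ℕ} (hinj : Function.Injective f)
    (w : W) (h : pairedAux H f (f w)) :
    ∃ a : W, f a + 1 = f w ∧ ¬H.Adj a w ∧ ¬ pairedAux H f (f a) := by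
  obtain ⟨t, ht⟩ : ∃ t, f w = t := ⟨f w, rfl⟩
  rw [ht] at h
  cases t with
  | zero => exact absurd h (by simp [pairedAux])
  | succ t =>
    obtain ⟨⟨a, b, ha, hb, hn⟩, hp⟩ := h
    have hbw : b = w := hinj (by rw [hb, ht])
    subst hbw
    exact ⟨a, by omega, hn, by rw [ha]; exact hp⟩

lemma pairedAux_intro {H : SimpleGraph W} {f : W → ℕ} {u v : W}
    (huv : f u + 1 = f v) (hn : ¬H.Adj u v) (hu : ¬ pairedAux H f (f u)) :
    pairedAux H f (f v) := by
  rw [← huv]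
  exact ⟨⟨u, v, rfl, huv.symm, hn⟩, hu⟩

/-- Key lemma: if the non-edges of `H` only join vertices with consecutive `f`-values
(for an injective `f : W → ℕ`), then `χ(H) = ω(H)`. -/
theorem chrom_eq_clique_of_linear [Finite W] (H : SimpleGraph W) (f : W → ℕ)
    (hinj : Function.Injective f)
    (hcons : ∀ a b : W, a ≠ b → ¬H.Adj a b → f a + 1 = f b ∨ f b + 1 = f a) :
    H.chromaticNumber = cliqueNumber H := by
  classical
  set U : Set W := {w : W | ¬ pairedAux H f (f w)} with hU
  have hUfin : U.Finite := Set.toFinite U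
  haveI : Fintype U := hUfin.fintype
  -- the coloring
  let color : W → U := fun w =>
    if h : pairedAux H f (f w) then
      ⟨(pairedAux_elim hinj w h).choose, (pairedAux_elim hinj w h).choose_spec.2.2⟩
    else ⟨w, h⟩
  have hvalid : ∀ {v w : W}, H.Adj v w → color v ≠ color w := by
    intro v w hadj heq
    have hne : v ≠ w := hadj.ne
    by_cases hv : pairedAux H f (f v) <;> by_cases hw : pairedAux H f (f w)
    · -- both paired
      simp only [color, dif_pos hv, dif_pos hw, Subtype.mk.injEq] at heq
      have h1 := (pairedAux_elim hinj v hv).choose_spec.1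
      have h2 := (pairedAux_elim hinj w hw).choose_spec.1
      rw [heq] at h1
      exact hne (hinj (by omega))
    · -- v paired, w not
      simp only [color, dif_pos hv, dif_neg hw, Subtype.mk.injEq] at heq
      have h1 := (pairedAux_elim hinj v hv).choose_spec.2.1
      rw [heq] at h1
      exact h1 hadj.symm
    · -- w paired, v not
      simp only [color, dif_neg hv, dif_pos hw, Subtype.mk.injEq] at heq
      have h1 := (pairedAux_elim hinj w hw).choose_spec.2.1
      rw [← heq] at h1
      exact h1 hadj
    · simp only [color, dif_neg hv, dif_neg hw, Subtype.mk.injEq] at heq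
      exact hne heq
  let C : H.Coloring U := SimpleGraph.Coloring.mk color hvalid
  -- the clique
  have hclique : H.IsClique ((hUfin.toFinset : Finset W) : Set W) := by
    intro a ha b hb hab
    simp only [Finset.mem_coe, hUfin.mem_toFinset, hU, Set.mem_setOf_eq] at ha hb
    by_contra hn
    rcases hcons a b hab hn with h | h
    · exact hb (pairedAux_intro h hn ha)
    · exact ha (pairedAux_intro h (fun h' => hn h'.symm) hb)
  have hcard : hUfin.toFinset.card = Fintype.card U := hUfin.card_toFinset
  -- putting it together
  have h1 : H.chromaticNumber ≤ (Fintype.card U : ℕ∞) :=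
    C.colorable.chromaticNumber_le
  have h2 : (Fintype.card U : ℕ∞) ≤ cliqueNumber H := by
    rw [← hcard]
    exact le_iSup₂_of_le hUfin.toFinset hclique le_rfl
  have h3 : cliqueNumber H ≤ H.chromaticNumber := by
    apply iSup₂_le
    intro t ht
    exact ht.card_le_chromaticNumber
  exact le_antisymm (h1.trans h2) h3

theorem isPerfect_of_linear [Finite W] (H : SimpleGraph W) (f : W → ℕ)
    (hinj : Function.Injective f)
    (hcons : ∀ a b : W, a ≠ b → ¬H.Adj a b → f a + 1 = f b ∨ f b + 1 = f a) :
    IsPerfect H := by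
  intro s
  apply chrom_eq_clique_of_linear (H.induce s) (fun a => f a.1)
  · exact hinj.comp Subtype.val_injective
  · intro a b hab hadj
    exact hcons a.1 b.1 (fun h => hab (Subtype.ext h)) hadj

end AuxLinear

/-- Antipaths (complements of path graphs) are contraction perfect. -/
theorem antipath_contractionPerfect (n : ℕ) (hn : 1 ≤ n) :
    IsContractionPerfect (SimpleGraph.pathGraph n)ᶜ := by
  intro F hF
  set K := SimpleGraph.fromEdgeSet F with hK
  -- representative of each connected component
  let rep : K.ConnectedComponent → Fin n := fun c => c.exists_rep.choose
  have hrep : ∀ c, K.connectedComponentMk (rep c) = c := fun c => c.exists_rep.choose_spec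
  apply isPerfect_of_linear _ (fun c => (rep c : ℕ))
  · intro c d h
    have : rep c = rep d := Fin.ext h
    rw [← hrep c, ← hrep d, this]
  · intro c d hcd hadj
    have hnadj : ¬(SimpleGraph.pathGraph n)ᶜ.Adj (rep c) (rep d) := by
      intro h
      exact hadj ⟨hcd, rep c, rep d, hrep c, hrep d, h⟩
    rw [SimpleGraph.compl_adj] at hnadj
    push_neg at hnadj
    have hne : rep c ≠ rep d := by
      intro h
      exact hcd (by rw [← hrep c, ← hrep d, h])
    have := hnadj hne
    rwa [SimpleGraph.pathGraph_adj] at this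
end

section
/- For every k ≥ 3 and every simple graph G, G is k-hole-free if and only if its utter graph u(G) is k-hole-free. -/
open SimpleGraph

universe u

variable {V : Type u}

/-- A graph is `k`-hole-free if every hole of the graph has at most `k` vertices. -/
def IsKHoleFree (G : SimpleGraph V) (k : ℕ) : Prop := ∀ n, HasHole G n → n ≤ k

section KHF
open Finset

lemma fin_sub_val_one {L : ℕ} (hL : 2 ≤ L) (i j : Fin L) :
    (i - j).val = 1 ↔ (i.val = j.val + 1 ∨ (j.val = L - 1 ∧ i.val = 0)) := by
  rcases i with ⟨a, ha⟩; rcases j with ⟨b, hb⟩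
  rw [Fin.sub_def]
  simp only []
  rcases le_or_gt b a with h | h
  · rw [show (L - b + a) = L + (a - b) by omega, Nat.add_mod_left,
      Nat.mod_eq_of_lt (by omega)]
    omega
  · rw [Nat.mod_eq_of_lt (by omega)]
    omega

def IsCycleMapF {W : Type*} (G : SimpleGraph W) (m : ℕ) (c : Fin m → W) : Prop :=
  Function.Injective c ∧ ∀ i j, G.Adj (c i) (c j) ↔ ((i - j).val = 1 ∨ (j - i).val = 1)

section Core
variable (G : SimpleGraph V) (n : ℕ) (S : ℕ → Set V)

noncomputable def holeIdx (v : V) : ℕ := sInf {a | a < n ∧ v ∈ S a}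

noncomputable def holeDD (v w : V) : ℤ :=
  if holeIdx n S w = holeIdx n S v + 1 ∨ (holeIdx n S v = n - 1 ∧ holeIdx n S w = 0) then 1
  else if holeIdx n S v = holeIdx n S w + 1 ∨ (holeIdx n S w = n - 1 ∧ holeIdx n S v = 0) then -1
  else 0

noncomputable def holeWd (L : ℕ) (c : ℕ → V) : ℤ :=
  ∑ i ∈ Finset.range L, holeDD n S (c i) (c (i+1))

def holeGd (v w : V) : Prop :=
  (v = w ∨ G.Adj v w) ∧ (∃ a, a < n ∧ v ∈ S a) ∧ (∃ a, a < n ∧ w ∈ S a)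

variable {G n S}

def HoleTouch : Prop := ∀ a, a < n → ∀ b, b < n → a ≠ b →
  ((∃ x ∈ S a, ∃ y ∈ S b, x = y ∨ G.Adj x y) ↔
    (b = a + 1 ∨ a = b + 1 ∨ (a = 0 ∧ b = n - 1) ∨ (b = 0 ∧ a = n - 1)))
lemma holeIdx_mem {v : V} (h : ∃ a, a < n ∧ v ∈ S a) :
    holeIdx n S v < n ∧ v ∈ S (holeIdx n S v) := by
  have : ({a | a < n ∧ v ∈ S a} : Set ℕ).Nonempty := by
    obtain ⟨a, ha, hv⟩ := h; exact ⟨a, ha, hv⟩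
  exact Nat.sInf_mem this

lemma holeIdx_le {v : V} {a : ℕ} (ha : a < n) (hv : v ∈ S a) : holeIdx n S v ≤ a :=
  Nat.sInf_le ⟨ha, hv⟩

lemma step_sectors (ht : HoleTouch (G := G) (n := n) (S := S)) {a b : ℕ} {x y : V}
    (ha : a < n) (hb : b < n) (hx : x ∈ S a) (hy : y ∈ S b)
    (hxy : x = y ∨ G.Adj x y) :
    a = b ∨ b = a + 1 ∨ a = b + 1 ∨ (a = 0 ∧ b = n - 1) ∨ (b = 0 ∧ a = n - 1) := by
  by_cases hab : a = b
  · exact Or.inl hab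
  · exact Or.inr ((ht a ha b hb hab).mp ⟨x, hx, y, hy, hxy⟩)

lemma mem_holeIdx (ht : HoleTouch (G := G) (n := n) (S := S)) {a : ℕ} {v : V}
    (ha : a < n) (hv : v ∈ S a) :
    holeIdx n S v = a ∨ holeIdx n S v + 1 = a ∨ (holeIdx n S v = 0 ∧ a = n - 1) := by
  have h1 := holeIdx_mem (S := S) ⟨a, ha, hv⟩
  have h2 := holeIdx_le (S := S) ha hv
  have h3 := step_sectors ht h1.1 ha h1.2 hv (Or.inl rfl)
  omega

lemma edge_holeIdx (ht : HoleTouch (G := G) (n := n) (S := S)) {v w : V}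
    (h : holeGd G n S v w) :
    holeIdx n S v < n ∧ holeIdx n S w < n ∧
    (holeIdx n S v = holeIdx n S w ∨ holeIdx n S w = holeIdx n S v + 1 ∨ holeIdx n S v = holeIdx n S w + 1 ∨
      (holeIdx n S v = 0 ∧ holeIdx n S w = n - 1) ∨ (holeIdx n S w = 0 ∧ holeIdx n S v = n - 1)) := by
  obtain ⟨hvw, hv, hw⟩ := h
  have h1 := holeIdx_mem (S := S) hv
  have h2 := holeIdx_mem (S := S) hw
  exact ⟨h1.1, h2.1, step_sectors ht h1.1 h2.1 h1.2 h2.2 hvw⟩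

lemma dd_antisymm (hn : 4 ≤ n) (v w : V) : holeDD n S w v = - holeDD n S v w := by
  unfold holeDD; split_ifs <;> omega

lemma dd_abs_le (v w : V) : |holeDD n S v w| ≤ 1 := by
  unfold holeDD; split_ifs <;> simp

lemma step_congr (hn : 4 ≤ n) (ht : HoleTouch (G := G) (n := n) (S := S)) {v w : V}
    (h : holeGd G n S v w) :
    (holeIdx n S w : ℤ) - holeIdx n S v - holeDD n S v w = 0 ∨
    (holeIdx n S w : ℤ) - holeIdx n S v - holeDD n S v w = n ∨
    (holeIdx n S w : ℤ) - holeIdx n S v - holeDD n S v w = -n := by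
  have h1 := edge_holeIdx ht h
  unfold holeDD; split_ifs <;> omega

lemma winding_dvd (hn : 4 ≤ n) (ht : HoleTouch (G := G) (n := n) (S := S)) {L : ℕ} {c : ℕ → V}
    (hw : ∀ i < L, holeGd G n S (c i) (c (i+1))) (hc : c L = c 0) :
    (n : ℤ) ∣ holeWd n S L c := by
  have h1 : ∑ i ∈ range L, ((holeIdx n S (c (i+1)) : ℤ) - holeIdx n S (c i)) = 0 := by
    rw [Finset.sum_range_sub (fun i => (holeIdx n S (c i) : ℤ)), hc]; ring
  have h2 : (n:ℤ) ∣ ∑ i ∈ range L,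
      ((holeIdx n S (c (i+1)) : ℤ) - holeIdx n S (c i) - holeDD n S (c i) (c (i+1))) := by
    refine Finset.dvd_sum fun i hi => ?_
    rcases step_congr hn ht (hw i (mem_range.mp hi)) with h | h | h <;> rw [h] <;> simp
  rw [Finset.sum_sub_distrib, h1, zero_sub, dvd_neg] at h2
  exact h2

lemma winding_le {L : ℕ} {c : ℕ → V} : |holeWd n S L c| ≤ (L : ℤ) := by
  calc |holeWd n S L c| ≤ ∑ i ∈ range L, |holeDD n S (c i) (c (i+1))| :=
        Finset.abs_sum_le_sum_abs _ _
    _ ≤ ∑ _i ∈ range L, (1:ℤ) := Finset.sum_le_sum fun i _ => dd_abs_le _ _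
    _ = L := by simp

lemma length_ge (hn : 4 ≤ n) (ht : HoleTouch (G := G) (n := n) (S := S)) {L : ℕ} {c : ℕ → V}
    (hw : ∀ i < L, holeGd G n S (c i) (c (i+1))) (hc : c L = c 0)
    (hne : holeWd n S L c ≠ 0) : n ≤ L := by
  have h1 := winding_dvd hn ht hw hc
  have h2 := winding_le (n := n) (S := S) (L := L) (c := c)
  have h3 : (n : ℤ) ≤ |holeWd n S L c| := Int.le_of_dvd (abs_pos.mpr hne) ((dvd_abs _ _).mpr h1)
  omega


lemma sum_range_split (f : ℕ → ℤ) (m k : ℕ) :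
    ∑ i ∈ range (m+k), f i = ∑ i ∈ range m, f i + ∑ i ∈ range k, f (m+i) := by
  have h : ∑ i ∈ Ico m (m+k), f i = ∑ i ∈ range k, f (m+i) := by
    rw [Finset.sum_Ico_eq_sum_range, Nat.add_sub_cancel_left]
  rw [range_eq_Ico, ← Finset.sum_Ico_consecutive f (Nat.zero_le m) (Nat.le_add_right m k), h,
    ← range_eq_Ico]

lemma walk_mem_U {L : ℕ} {c : ℕ → V} (hw : ∀ i < L, holeGd G n S (c i) (c (i+1)))
    (hL : 1 ≤ L) {i : ℕ} (hi : i ≤ L) : ∃ a, a < n ∧ c i ∈ S a := by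
  rcases lt_or_eq_of_le hi with h | h
  · exact (hw i h).2.1
  · have h2 := (hw (L-1) (by omega)).2.2
    rwa [show L - 1 + 1 = i by omega] at h2

lemma key_split {L a b : ℕ} (c : ℕ → V) (hab : a < b) (hbL : b ≤ L) :
    holeWd n S L c = ∑ i ∈ range a, holeDD n S (c i) (c (i+1))
        + ∑ i ∈ range (b-a), holeDD n S (c (a+i)) (c (a+i+1))
        + ∑ i ∈ range (L - b), holeDD n S (c (b+i)) (c (b+i+1)) := by
  unfold holeWd
  set q := L - b with hq
  rw [show L = a + ((b-a) + q) by omega, sum_range_split, sum_range_split, ← add_assoc]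
  congr 1
  refine Finset.sum_congr rfl fun i _ => ?_
  beta_reduce
  rw [show a + ((b-a) + i) = b + i by omega]

lemma splice_repeat {L a b : ℕ} {c : ℕ → V}
    (hw : ∀ i < L, holeGd G n S (c i) (c (i+1))) (hc : c L = c 0)
    (hab : a < b) (hbL : b ≤ L) (heq : c a = c b) :
    ∃ (c1 c2 : ℕ → V),
      (∀ i < b - a, holeGd G n S (c1 i) (c1 (i+1))) ∧ c1 (b-a) = c1 0 ∧
      (∀ i < L - (b - a), holeGd G n S (c2 i) (c2 (i+1))) ∧ c2 (L - (b-a)) = c2 0 ∧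
      holeWd n S (b-a) c1 + holeWd n S (L-(b-a)) c2 = holeWd n S L c := by
  set p := b - a with hp
  set c1 : ℕ → V := fun j => c (a + j) with hc1
  set c2 : ℕ → V := fun j => if j ≤ a then c j else c (j + p) with hc2
  have hv1 : ∀ j, c1 j = c (a + j) := fun _ => rfl
  have hv2 : ∀ j, c2 j = if j ≤ a then c j else c (j + p) := fun _ => rfl
  refine ⟨c1, c2, ?_, ?_, ?_, ?_, ?_⟩
  · intro i hi
    rw [hv1, hv1, show a + (i+1) = (a+i)+1 from rfl]
    exact hw (a+i) (by omega)
  · rw [hv1, hv1, show a + p = b by omega, show a + 0 = a from rfl, heq]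
  · intro i hi
    rw [hv2, hv2]
    rcases lt_trichotomy i a with h | h | h
    · rw [if_pos (by omega), if_pos (by omega)]
      exact hw i (by omega)
    · subst h
      rw [if_pos (le_refl i), if_neg (by omega), show i + 1 + p = b + 1 by omega, heq]
      exact hw b (by omega)
    · rw [if_neg (by omega), if_neg (by omega), show i + 1 + p = (i + p) + 1 by omega]
      exact hw (i + p) (by omega)
  · rw [hv2, hv2, if_pos (Nat.zero_le a)]
    rcases le_or_gt (L - p) a with h | h
    · rw [if_pos h, show L - p = a by omega, heq, show b = L by omega, hc]
    · rw [if_neg (by omega), show L - p + p = L by omega, hc]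
  · have h1 : holeWd n S p c1 = ∑ i ∈ range p, holeDD n S (c (a+i)) (c (a+i+1)) := by
      unfold holeWd
      refine Finset.sum_congr rfl fun i _ => ?_
      rw [hv1, hv1]
      rfl
    have h2 : holeWd n S (L - p) c2
        = ∑ i ∈ range a, holeDD n S (c i) (c (i+1))
          + ∑ i ∈ range (L - b), holeDD n S (c (b+i)) (c (b+i+1)) := by
      unfold holeWd
      rw [show L - p = a + (L - b) by omega, sum_range_split]
      congr 1
      · refine Finset.sum_congr rfl fun i hi => ?_
        rw [mem_range] at hi
        beta_reduce
        rw [hv2, hv2, if_pos (by omega), if_pos (by omega)]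
      · refine Finset.sum_congr rfl fun i hi => ?_
        rw [mem_range] at hi
        beta_reduce
        rw [hv2, hv2]
        rcases Nat.eq_zero_or_pos i with h0 | h0
        · subst h0
          rw [if_pos (by omega), if_neg (by omega), show a + 0 = a from rfl, heq,
            show a + 0 + 1 + p = b + 0 + 1 by omega, show b + 0 = b from rfl]
        · rw [if_neg (by omega), if_neg (by omega), show a + i + p = b + i by omega,
            show a + i + 1 + p = b + i + 1 by omega]
    rw [h1, h2, key_split c hab hbL]; ring


lemma splice_chord (hn : 4 ≤ n) {L a b : ℕ} {c : ℕ → V}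
    (hw : ∀ i < L, holeGd G n S (c i) (c (i+1))) (hc : c L = c 0)
    (hab : a < b) (hbL : b ≤ L) (hadj : G.Adj (c a) (c b)) :
    ∃ (c1 c2 : ℕ → V),
      (∀ i < b - a + 1, holeGd G n S (c1 i) (c1 (i+1))) ∧ c1 (b-a+1) = c1 0 ∧
      (∀ i < L - (b - a) + 1, holeGd G n S (c2 i) (c2 (i+1))) ∧ c2 (L - (b-a) + 1) = c2 0 ∧
      holeWd n S (b-a+1) c1 + holeWd n S (L-(b-a)+1) c2 = holeWd n S L c := by
  set p := b - a with hp
  have hL1 : 1 ≤ L := by omega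
  have hmemU : ∀ i ≤ L, ∃ a', a' < n ∧ c i ∈ S a' := fun i hi => walk_mem_U hw hL1 hi
  set c1 : ℕ → V := fun j => if j ≤ p then c (a + j) else c a with hc1
  set c2 : ℕ → V := fun j => if j ≤ a then c j else c (j - 1 + p) with hc2
  have hv1 : ∀ j, c1 j = if j ≤ p then c (a + j) else c a := fun _ => rfl
  have hv2 : ∀ j, c2 j = if j ≤ a then c j else c (j - 1 + p) := fun _ => rfl
  refine ⟨c1, c2, ?_, ?_, ?_, ?_, ?_⟩
  · intro i hi
    rw [hv1, hv1]
    rcases lt_or_eq_of_le (Nat.lt_succ_iff.mp hi) with h | h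
    · rw [if_pos (by omega), if_pos (by omega)]
      exact hw (a+i) (by omega)
    · subst h
      rw [if_pos (le_refl p), if_neg (by omega), show a + p = b by omega]
      exact ⟨Or.inr hadj.symm, hmemU b hbL, hmemU a (by omega)⟩
  · rw [hv1, hv1, if_neg (by omega), if_pos (Nat.zero_le p), show a + 0 = a from rfl]
  · intro i hi
    rw [hv2, hv2]
    rcases lt_trichotomy i a with h | h | h
    · rw [if_pos (by omega), if_pos (by omega)]
      exact hw i (by omega)
    · subst h
      rw [if_pos (le_refl i), if_neg (by omega), show i + 1 - 1 + p = b by omega]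
      exact ⟨Or.inr hadj, hmemU i (by omega), hmemU b hbL⟩
    · rw [if_neg (by omega), if_neg (by omega), show i + 1 - 1 + p = (i - 1 + p) + 1 by omega]
      exact hw (i - 1 + p) (by omega)
  · rw [hv2, hv2, if_neg (by omega), if_pos (Nat.zero_le a),
      show L - p + 1 - 1 + p = L by omega, hc]
  · have h1 : holeWd n S (p+1) c1
        = ∑ i ∈ range p, holeDD n S (c (a+i)) (c (a+i+1)) + holeDD n S (c b) (c a) := by
      unfold holeWd
      rw [Finset.sum_range_succ]
      congr 1
      · refine Finset.sum_congr rfl fun i hi => ?_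
        rw [mem_range] at hi
        rw [hv1, hv1, if_pos (by omega), if_pos (by omega)]
        rfl
      · rw [hv1, hv1, if_pos (le_refl p), if_neg (by omega), show a + p = b by omega]
    have h2 : holeWd n S (L - p + 1) c2
        = (∑ i ∈ range a, holeDD n S (c i) (c (i+1)) + holeDD n S (c a) (c b))
          + ∑ i ∈ range (L - b), holeDD n S (c (b+i)) (c (b+i+1)) := by
      unfold holeWd
      rw [show L - p + 1 = (a + 1) + (L - b) by omega, sum_range_split,
        Finset.sum_range_succ]
      congr 1
      · congr 1
        · refine Finset.sum_congr rfl fun i hi => ?_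
          rw [mem_range] at hi
          rw [hv2, hv2, if_pos (by omega), if_pos (by omega)]
        · rw [hv2, hv2, if_pos (le_refl a), if_neg (by omega), show a + 1 - 1 + p = b by omega]
      · refine Finset.sum_congr rfl fun i hi => ?_
        rw [mem_range] at hi
        beta_reduce
        rw [hv2, hv2, if_neg (by omega), if_neg (by omega),
          show a + 1 + i - 1 + p = b + i by omega,
          show a + 1 + i + 1 - 1 + p = b + i + 1 by omega]
    rw [h1, h2, key_split c hab hbL, dd_antisymm hn (c a) (c b)]; ring


lemma Tstep_even (hn : 4 ≤ n) (ht : HoleTouch (G := G) (n := n) (S := S)) {k : ℕ}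
    (hk : k ≤ n - 2) {v w : V} (hv : v ∈ S k) (hw : w ∈ S (k+1))
    (hvw : v = w ∨ G.Adj v w) :
    (holeIdx n S w : ℤ) - holeIdx n S v - holeDD n S v w = 0 := by
  have hkn : k < n := by omega
  have hk1n : k + 1 < n := by omega
  have h1 := mem_holeIdx ht hkn hv
  have h2 := mem_holeIdx ht hk1n hw
  have hiv := holeIdx_mem (S := S) ⟨k, hkn, hv⟩
  have hiw := holeIdx_mem (S := S) ⟨k+1, hk1n, hw⟩
  have h3 := step_sectors ht hkn hiw.1 hv hiw.2 hvw
  have h4 := step_sectors ht hiv.1 hk1n hiv.2 hw hvw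
  have h5 := hiv.1; have h6 := hiw.1
  unfold holeDD; split_ifs <;> omega

lemma Tstep_same (hn : 4 ≤ n) (ht : HoleTouch (G := G) (n := n) (S := S)) {m : ℕ}
    (hm : m ≤ n - 2) {v w : V} (hv : v ∈ S m) (hw : w ∈ S m)
    (hvw : v = w ∨ G.Adj v w) :
    (holeIdx n S w : ℤ) - holeIdx n S v - holeDD n S v w = 0 := by
  have hmn : m < n := by omega
  have h1 := mem_holeIdx ht hmn hv
  have h2 := mem_holeIdx ht hmn hw
  have hiv := holeIdx_mem (S := S) ⟨m, hmn, hv⟩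
  have hiw := holeIdx_mem (S := S) ⟨m, hmn, hw⟩
  have h3 := step_sectors ht hiv.1 hiw.1 hiv.2 hiw.2 hvw
  have h5 := hiv.1; have h6 := hiw.1
  unfold holeDD; split_ifs <;> omega

set_option maxHeartbeats 1000000 in
lemma Tstep_last (hn : 4 ≤ n) (ht : HoleTouch (G := G) (n := n) (S := S))
    {v0 v1 v2 v3 : V} (hv0 : v0 ∈ S (n-2)) (hv1 : v1 ∈ S (n-1)) (hv2 : v2 ∈ S (n-1))
    (hv3 : v3 ∈ S 0)
    (h01 : v0 = v1 ∨ G.Adj v0 v1) (h12 : v1 = v2 ∨ G.Adj v1 v2)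
    (h23 : v2 = v3 ∨ G.Adj v2 v3) :
    ((holeIdx n S v2 : ℤ) - holeIdx n S v1 - holeDD n S v1 v2)
      + ((holeIdx n S v3 : ℤ) - holeIdx n S v2 - holeDD n S v2 v3) = -n := by
  have hn2 : n - 2 < n := by omega
  have hn1 : n - 1 < n := by omega
  have h0n : (0:ℕ) < n := by omega
  have h1 := mem_holeIdx ht hn1 hv1
  have h2 := mem_holeIdx ht hn1 hv2
  have h3 := mem_holeIdx ht h0n hv3
  have hiv1 := holeIdx_mem (S := S) ⟨n-1, hn1, hv1⟩
  have hiv2 := holeIdx_mem (S := S) ⟨n-1, hn1, hv2⟩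
  -- exclude holeIdx v1 = 0 via previous step from sector n-2
  have h4 := step_sectors ht hn2 hiv1.1 hv0 hiv1.2 h01
  -- exclude holeIdx v2 = n-2 via next step to sector 0
  have h5 := step_sectors ht hiv2.1 h0n hiv2.2 hv3 h23
  -- relation between holeIdx v1 and holeIdx v2
  have h6 := step_sectors ht hiv1.1 hiv2.1 hiv1.2 hiv2.2 h12
  have h7 := hiv1.1; have h8 := hiv2.1
  have hx3 : holeIdx n S v3 = 0 := by omega
  have hp : holeIdx n S v1 = n-2 ∨ holeIdx n S v1 = n-1 := by omega
  have hq : holeIdx n S v2 = 0 ∨ holeIdx n S v2 = n-1 := by omega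
  unfold holeDD
  split_ifs <;> omega


lemma exists_winding (hn : 4 ≤ n) (ht : HoleTouch (G := G) (n := n) (S := S))
    (hcl : ∀ a, a < n → ∀ x ∈ S a, ∀ y ∈ S a, x = y ∨ G.Adj x y) :
    ∃ c : ℕ → V, (∀ i < 2*n, holeGd G n S (c i) (c (i+1))) ∧ c (2*n) = c 0 ∧
      holeWd n S (2*n) c = n := by
  classical
  -- a default vertex
  obtain ⟨x0, hx0, -⟩ := (ht 0 (by omega) 1 (by omega) (by omega)).mpr (by omega)
  have hsel : ∀ k, ∃ x y : V, k < n →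
      (x ∈ S k ∧ y ∈ S ((k+1) % n) ∧ (x = y ∨ G.Adj x y)) := by
    intro k
    by_cases hk : k < n
    · have hb : (k+1) % n < n := Nat.mod_lt _ (by omega)
      have hmod : (k+1) % n = k + 1 ∨ ((k+1) % n = 0 ∧ k + 1 = n) := by
        rcases Nat.lt_or_ge (k+1) n with h | h
        · exact Or.inl (Nat.mod_eq_of_lt h)
        · have he : k + 1 = n := by omega
          rw [he, Nat.mod_self]; exact Or.inr ⟨rfl, rfl⟩
      have hne : k ≠ (k+1) % n := by omega
      obtain ⟨x, hx, y, hy, hxy⟩ := (ht k hk _ hb hne).mpr (by omega)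
      exact ⟨x, y, fun _ => ⟨hx, hy, hxy⟩⟩
    · exact ⟨x0, x0, fun h => absurd h hk⟩
  choose X Y hXY using hsel
  set c : ℕ → V := fun t => if t % 2 = 0 then X ((t/2) % n) else Y ((t/2) % n) with hcdef
  have hcv : ∀ t, c t = if t % 2 = 0 then X ((t/2) % n) else Y ((t/2) % n) := fun _ => rfl
  have hceven : ∀ k, c (2*k) = X (k % n) := by
    intro k; rw [hcv, if_pos (by omega), show 2*k/2 = k by omega]
  have hcodd : ∀ k, c (2*k+1) = Y (k % n) := by
    intro k; rw [hcv, if_neg (by omega), show (2*k+1)/2 = k by omega]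
  have hb : ∀ k, k < n → (k+1) % n < n := fun k hk => Nat.mod_lt _ (by omega)
  have hclosed : c (2*n) = c 0 := by
    rw [show (0:ℕ) = 2*0 by ring, hceven, hceven, Nat.mod_self, Nat.zero_mod]
  refine ⟨c, ?_, hclosed, ?_⟩
  · intro i hi
    rcases Nat.even_or_odd i with ⟨k, hk2⟩ | ⟨k, hk2⟩
    · have hkn : k < n := by omega
      rw [hk2, show k + k = 2*k by ring, show 2*k+1 = 2*k+1 from rfl, hceven, hcodd,
        Nat.mod_eq_of_lt hkn]
      exact ⟨(hXY k hkn).2.2, ⟨k, hkn, (hXY k hkn).1⟩, ⟨_, hb k hkn, (hXY k hkn).2.1⟩⟩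
    · have hkn : k < n := by omega
      rw [hk2, hcodd, show 2*k+1+1 = 2*(k+1) by ring, hceven, Nat.mod_eq_of_lt hkn]
      have h1 := (hXY k hkn).2.1
      have h2 := (hXY ((k+1) % n) (hb k hkn)).1
      exact ⟨hcl _ (hb k hkn) _ h1 _ h2, ⟨_, hb k hkn, h1⟩, ⟨_, hb k hkn, h2⟩⟩
  · -- winding computation
    have hJ : ∑ i ∈ range (2*n), ((holeIdx n S (c (i+1)) : ℤ) - holeIdx n S (c i)) = 0 := by
      rw [Finset.sum_range_sub (fun i => (holeIdx n S (c i) : ℤ)), hclosed, sub_self]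
    have hT : ∑ i ∈ range (2*n),
        (((holeIdx n S (c (i+1)) : ℤ) - holeIdx n S (c i)) - holeDD n S (c i) (c (i+1))) = -n := by
      rw [show 2*n = (2*n-3) + 3 by omega, sum_range_split]
      have h0 : ∑ i ∈ range (2*n-3),
          (((holeIdx n S (c (i+1)) : ℤ) - holeIdx n S (c i)) - holeDD n S (c i) (c (i+1))) = 0 := by
        refine Finset.sum_eq_zero fun i hi => ?_
        rw [mem_range] at hi
        rcases Nat.even_or_odd i with ⟨k, hk2⟩ | ⟨k, hk2⟩
        · have hkn : k ≤ n - 2 := by omega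
          rw [hk2, show k + k = 2*k by ring, hceven, hcodd, Nat.mod_eq_of_lt (by omega)]
          refine Tstep_even hn ht hkn (hXY k (by omega)).1 ?_ (hXY k (by omega)).2.2
          have := (hXY k (by omega)).2.1
          rwa [Nat.mod_eq_of_lt (by omega)] at this
        · have hkn : k + 1 ≤ n - 2 := by omega
          rw [hk2, hcodd, show 2*k+1+1 = 2*(k+1) by ring, hceven,
            Nat.mod_eq_of_lt (show k < n by omega), Nat.mod_eq_of_lt (show k+1 < n by omega)]
          have h1 := (hXY k (by omega)).2.1
          rw [Nat.mod_eq_of_lt (show k+1 < n by omega)] at h1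
          have h2 := (hXY (k+1) (by omega)).1
          refine Tstep_same hn ht hkn h1 h2 ?_
          have := hcl (k+1) (by omega) _ h1 _ h2
          exact this
      rw [h0, zero_add]
      -- the last three steps
      have e1 : c (2*n-3) = Y (n-2) := by
        rw [show 2*n-3 = 2*(n-2)+1 by omega, hcodd, Nat.mod_eq_of_lt (by omega)]
      have e2 : c (2*n-2) = X (n-1) := by
        rw [show 2*n-2 = 2*(n-1) by omega, hceven, Nat.mod_eq_of_lt (by omega)]
      have e3 : c (2*n-1) = Y (n-1) := by
        rw [show 2*n-1 = 2*(n-1)+1 by omega, hcodd, Nat.mod_eq_of_lt (by omega)]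
      have e4 : c (2*n) = X 0 := by rw [hceven, Nat.mod_self]
      have hYn2 : Y (n-2) ∈ S (n-1) := by
        have := (hXY (n-2) (by omega)).2.1
        rwa [show n-2+1 = n-1 by omega, Nat.mod_eq_of_lt (by omega)] at this
      have hXn1 : X (n-1) ∈ S (n-1) := (hXY (n-1) (by omega)).1
      have hYn1 : Y (n-1) ∈ S 0 := by
        have := (hXY (n-1) (by omega)).2.1
        rwa [show n-1+1 = n by omega, Nat.mod_self] at this
      have hX0 : X 0 ∈ S 0 := (hXY 0 (by omega)).1
      have h01 : X (n-2) = Y (n-2) ∨ G.Adj (X (n-2)) (Y (n-2)) := (hXY (n-2) (by omega)).2.2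
      have h12 : Y (n-2) = X (n-1) ∨ G.Adj (Y (n-2)) (X (n-1)) :=
        hcl (n-1) (by omega) _ hYn2 _ hXn1
      have h23 : X (n-1) = Y (n-1) ∨ G.Adj (X (n-1)) (Y (n-1)) :=
        (hXY (n-1) (by omega)).2.2
      have h34 : Y (n-1) = X 0 ∨ G.Adj (Y (n-1)) (X 0) := hcl 0 (by omega) _ hYn1 _ hX0
      have hlast := Tstep_last hn ht (hXY (n-2) (by omega)).1 hYn2 hXn1 hYn1 h01 h12 h23
      have hsame := Tstep_same hn ht (show (0:ℕ) ≤ n - 2 by omega) hYn1 hX0 h34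
      have hthree : ∀ f : ℕ → ℤ, ∑ i ∈ range 3, f i = f 0 + f 1 + f 2 := by
        intro f
        rw [show (3:ℕ) = 2+1 from rfl, Finset.sum_range_succ, show (2:ℕ) = 1+1 from rfl,
          Finset.sum_range_succ, Finset.sum_range_one]
      rw [hthree]
      beta_reduce
      rw [show 2*n-3+0 = 2*n-3 by omega, show 2*n-3+1 = 2*n-2 by omega,
        show 2*n-3+2 = 2*n-1 by omega, show 2*n-2+1 = 2*n-1 by omega,
        show 2*n-1+1 = 2*n by omega]
      rw [e1, e2, e3, e4]
      linarith [hlast, hsame]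
    have hsub : ∑ i ∈ range (2*n),
        (((holeIdx n S (c (i+1)) : ℤ) - holeIdx n S (c i)) - holeDD n S (c i) (c (i+1)))
        = ∑ i ∈ range (2*n), ((holeIdx n S (c (i+1)) : ℤ) - holeIdx n S (c i))
          - ∑ i ∈ range (2*n), holeDD n S (c i) (c (i+1)) := Finset.sum_sub_distrib _ _
    have : holeWd n S (2*n) c = ∑ i ∈ range (2*n), holeDD n S (c i) (c (i+1)) := rfl
    rw [this]
    linarith [hJ, hT, hsub]




lemma core_hole (hn : 4 ≤ n) (ht : HoleTouch (G := G) (n := n) (S := S))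
    (hcl : ∀ a, a < n → ∀ x ∈ S a, ∀ y ∈ S a, x = y ∨ G.Adj x y) :
    ∃ m, n ≤ m ∧ ∃ f : Fin m → V, IsCycleMapF G m f := by
  classical
  obtain ⟨c0, hw0, hc0, hW0⟩ := exists_winding hn ht hcl
  have hex : ∃ L, ∃ c : ℕ → V, (∀ i < L, holeGd G n S (c i) (c (i+1))) ∧ c L = c 0 ∧
      holeWd n S L c ≠ 0 :=
    ⟨2*n, c0, hw0, hc0, by rw [hW0]; exact_mod_cast (by omega : (n:ℤ) ≠ 0)⟩
  set L := Nat.find hex with hLdef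
  obtain ⟨c, hw, hcc, hWne⟩ := Nat.find_spec hex
  have hmin : ∀ L' < L, ¬ ∃ c : ℕ → V, (∀ i < L', holeGd G n S (c i) (c (i+1))) ∧
      c L' = c 0 ∧ holeWd n S L' c ≠ 0 := fun L' h => Nat.find_min hex h
  have hnL : n ≤ L := length_ge hn ht hw hcc hWne
  have hL4 : 4 ≤ L := by omega
  -- no repeated vertices (except the closing one)
  have hno_rep : ∀ a b, a < b → b ≤ L → b - a < L → c a ≠ c b := by
    intro a b hab hbL hba heq
    obtain ⟨c1, c2, h1w, h1c, h2w, h2c, hsum⟩ := splice_repeat hw hcc hab hbL heq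
    rcases eq_or_ne (holeWd n S (b-a) c1) 0 with h | h
    · have h2 : holeWd n S (L-(b-a)) c2 ≠ 0 := by
        intro h2; apply hWne; rw [← hsum, h, h2]; ring
      exact hmin (L-(b-a)) (by omega) ⟨c2, h2w, h2c, h2⟩
    · exact hmin (b-a) (by omega) ⟨c1, h1w, h1c, h⟩
  -- no chords
  have hno_chord : ∀ a b, a < b → b ≤ L → 2 ≤ b - a → b - a ≤ L - 2 →
      ¬ G.Adj (c a) (c b) := by
    intro a b hab hbL h2 h3 hadj
    obtain ⟨c1, c2, h1w, h1c, h2w, h2c, hsum⟩ := splice_chord hn hw hcc hab hbL hadj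
    rcases eq_or_ne (holeWd n S (b-a+1) c1) 0 with h | h
    · have hh : holeWd n S (L-(b-a)+1) c2 ≠ 0 := by
        intro hh; apply hWne; rw [← hsum, h, hh]; ring
      exact hmin (L-(b-a)+1) (by omega) ⟨c2, h2w, h2c, hh⟩
    · exact hmin (b-a+1) (by omega) ⟨c1, h1w, h1c, h⟩
  have hinj : ∀ a b, a < b → b < L → c a ≠ c b := fun a b hab hbL =>
    hno_rep a b hab (le_of_lt hbL) (by omega)
  refine ⟨L, hnL, fun i => c i.val, ?_, ?_⟩
  · intro i j hij
    rcases lt_trichotomy i.val j.val with h | h | h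
    · exact absurd hij (hinj _ _ h j.isLt)
    · exact Fin.ext h
    · exact absurd hij.symm (hinj _ _ h i.isLt)
  · intro i j
    rw [fin_sub_val_one (by omega), fin_sub_val_one (by omega)]
    constructor
    · intro hadj
      have hadj' : G.Adj (c i.val) (c j.val) := hadj
      by_contra hcon
      rcases lt_trichotomy i.val j.val with h | h | h
      · refine hno_chord i.val j.val h (le_of_lt j.isLt) (by omega) (by omega) hadj'
      · exact G.loopless.irrefl _ (by rwa [h] at hadj')
      · refine hno_chord j.val i.val h (le_of_lt i.isLt) (by omega) (by omega) hadj'.symm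
    · intro hcon
      show G.Adj (c i.val) (c j.val)
      have step_adj : ∀ a, a < L → G.Adj (c a) (c (a+1)) := by
        intro a ha
        rcases (hw a ha).1 with he | he
        · exfalso
          rcases eq_or_lt_of_le (show a + 1 ≤ L by omega) with h1 | h1
          · have he2 : c a = c 0 := by
              rw [show a + 1 = Nat.find hex by omega] at he
              exact he.trans hcc
            have ha0 : 0 < a := by
              rcases Nat.eq_zero_or_pos a with h0 | h0
              · exfalso; omega
              · exact h0
            exact hno_rep 0 a ha0 (by omega) (by omega) he2.symm
          · exact hno_rep a (a+1) (by omega) (by omega) (by omega) he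
        · exact he
      rcases hcon with (h | ⟨h1, h2⟩) | (h | ⟨h1, h2⟩)
      · -- i.val = j.val + 1
        have hh := step_adj j.val (by omega)
        rw [show j.val + 1 = i.val from h.symm] at hh
        exact hh.symm
      · -- j = L-1, i = 0 : edge from c (L-1) to c L = c 0
        have := step_adj (L-1) (by omega)
        rw [show L - 1 + 1 = L by omega, hcc] at this
        rw [h1, h2]
        exact this.symm
      · have := step_adj i.val (by omega)
        rwa [show i.val + 1 = j.val from h.symm] at this
      · have := step_adj (L-1) (by omega)
        rw [show L - 1 + 1 = L by omega, hcc] at this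
        rw [h1, h2]
        exact this
end Core

lemma hasHole_iff_cycleMap {W : Type*} (G : SimpleGraph W) (m : ℕ) (hm : 4 ≤ m) :
    HasHole G m ↔ ∃ c : Fin m → W, IsCycleMapF G m c := by
  constructor
  · rintro ⟨-, s, ⟨e⟩⟩
    refine ⟨fun i => (e.symm i).1, fun i j hij => ?_, fun i j => ?_⟩
    · exact e.symm.injective (Subtype.ext hij)
    · rw [show G.Adj (e.symm i).1 (e.symm j).1 ↔ (G.induce s).Adj (e.symm i) (e.symm j)
        from Iff.rfl, e.symm.map_adj_iff, cycleGraph_adj']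
  · rintro ⟨c, hinj, hadj⟩
    refine ⟨hm, Set.range c, ⟨?_⟩⟩
    refine RelIso.symm ⟨Equiv.ofInjective c hinj, ?_⟩
    intro i j
    rw [cycleGraph_adj']
    exact hadj i j

def mset (G : SimpleGraph V) (A : V ⊕ G.edgeSet) : Set V :=
  match A with
  | Sum.inl x => {x}
  | Sum.inr e => {v | v ∈ (e : Sym2 V)}

lemma edge_clique {G : SimpleGraph V} {e : Sym2 V} (he : e ∈ G.edgeSet) {x y : V}
    (hx : x ∈ e) (hy : y ∈ e) : x = y ∨ G.Adj x y := by
  induction e with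
  | _ u v =>
    rw [SimpleGraph.mem_edgeSet] at he
    rw [Sym2.mem_iff] at hx hy
    rcases hx with rfl | rfl <;> rcases hy with rfl | rfl
    · exact Or.inl rfl
    · exact Or.inr he
    · exact Or.inr he.symm
    · exact Or.inl rfl

lemma touch_iff {G : SimpleGraph V} {A B : V ⊕ G.edgeSet} (hAB : A ≠ B) :
    (∃ x ∈ mset G A, ∃ y ∈ mset G B, x = y ∨ G.Adj x y) ↔ (utterGraph G).Adj A B := by
  rcases A with x | e <;> rcases B with y | f
  · have hxy : x ≠ y := fun h => hAB (by rw [h])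
    show _ ↔ G.Adj x y
    constructor
    · rintro ⟨a, ha, b, hb, h⟩
      rw [show a = x from ha, show b = y from hb] at h
      exact h.resolve_left hxy
    · intro h
      exact ⟨x, rfl, y, rfl, Or.inr h⟩
  · show _ ↔ (x ∈ (f : Sym2 V) ∨ ∃ y ∈ (f : Sym2 V), G.Adj x y)
    constructor
    · rintro ⟨a, ha, b, hb, h⟩
      rw [show a = x from ha] at h
      rcases h with rfl | h
      · exact Or.inl hb
      · exact Or.inr ⟨b, hb, h⟩
    · rintro (h | ⟨b, hb, h⟩)
      · exact ⟨x, rfl, x, h, Or.inl rfl⟩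
      · exact ⟨x, rfl, b, hb, Or.inr h⟩
  · show _ ↔ (y ∈ (e : Sym2 V) ∨ ∃ z ∈ (e : Sym2 V), G.Adj y z)
    constructor
    · rintro ⟨a, ha, b, hb, h⟩
      rw [show b = y from hb] at h
      rcases h with rfl | h
      · exact Or.inl ha
      · exact Or.inr ⟨a, ha, h.symm⟩
    · rintro (h | ⟨b, hb, h⟩)
      · exact ⟨y, h, y, rfl, Or.inl rfl⟩
      · exact ⟨b, hb, y, rfl, Or.inr h.symm⟩
  · have hef : e ≠ f := fun h => hAB (by rw [h])
    show _ ↔ (e ≠ f ∧ ((∃ x, x ∈ (e : Sym2 V) ∧ x ∈ (f : Sym2 V)) ∨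
        ∃ x ∈ (e : Sym2 V), ∃ y ∈ (f : Sym2 V), G.Adj x y))
    constructor
    · rintro ⟨a, ha, b, hb, h⟩
      refine ⟨hef, ?_⟩
      rcases h with rfl | h
      · exact Or.inl ⟨a, ha, hb⟩
      · exact Or.inr ⟨a, ha, b, hb, h⟩
    · rintro ⟨-, (⟨a, ha, ha'⟩ | ⟨a, ha, b, hb, h⟩)⟩
      · exact ⟨a, ha, a, ha', Or.inl rfl⟩
      · exact ⟨a, ha, b, hb, Or.inr h⟩

lemma utter_hole_to_hole {G : SimpleGraph V} {N : ℕ} (hN : 4 ≤ N)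
    (hH : HasHole (utterGraph G) N) : ∃ m, N ≤ m ∧ HasHole G m := by
  obtain ⟨c, hinj, hadj⟩ := (hasHole_iff_cycleMap (utterGraph G) N hN).mp hH
  have hN0 : 0 < N := by omega
  set S : ℕ → Set V := fun a => mset G (c ⟨a % N, Nat.mod_lt _ hN0⟩) with hS
  have hSv : ∀ (a : ℕ) (ha : a < N), S a = mset G (c ⟨a, ha⟩) := by
    intro a ha
    simp only [hS]
    have he : (⟨a % N, Nat.mod_lt _ hN0⟩ : Fin N) = ⟨a, ha⟩ :=
      Fin.ext (Nat.mod_eq_of_lt ha)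
    rw [he]
  have ht : HoleTouch (G := G) (n := N) (S := S) := by
    intro a ha b hb hab
    rw [hSv a ha, hSv b hb]
    have hne : c ⟨a, ha⟩ ≠ c ⟨b, hb⟩ := by
      intro h
      exact hab (congrArg Fin.val (hinj h))
    rw [touch_iff hne, hadj, fin_sub_val_one (by omega), fin_sub_val_one (by omega)]
    show (a = b + 1 ∨ (b = N - 1 ∧ a = 0)) ∨ (b = a + 1 ∨ (a = N - 1 ∧ b = 0)) ↔ _
    omega
  have hcl : ∀ a, a < N → ∀ x ∈ S a, ∀ y ∈ S a, x = y ∨ G.Adj x y := by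
    intro a ha x hx y hy
    rw [hSv a ha] at hx hy
    rcases hc : c ⟨a, by omega⟩ with z | e
    · rw [hc] at hx hy
      rw [show x = z from hx, show y = z from hy]
      exact Or.inl rfl
    · rw [hc] at hx hy
      exact edge_clique e.2 hx hy
  obtain ⟨m, hm, f, hf⟩ := core_hole hN ht hcl
  exact ⟨m, hm, (hasHole_iff_cycleMap G m (by omega)).mpr ⟨f, hf⟩⟩

lemma hole_to_utter_hole {G : SimpleGraph V} {N : ℕ} (hH : HasHole G N) :
    HasHole (utterGraph G) N := by
  have hN : 4 ≤ N := hH.1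
  obtain ⟨c, hinj, hadj⟩ := (hasHole_iff_cycleMap G N hN).mp hH
  refine (hasHole_iff_cycleMap (utterGraph G) N hN).mpr
    ⟨fun i => Sum.inl (c i), fun i j hij => hinj (Sum.inl_injective hij), fun i j => ?_⟩
  show G.Adj (c i) (c j) ↔ _
  exact hadj i j

end KHF

/-- For every `k ≥ 3`, a graph is `k`-hole-free iff its utter graph is
`k`-hole-free. -/
theorem kHoleFree_iff_utter_kHoleFree {V : Type u} (G : SimpleGraph V) (k : ℕ)
    (hk : 3 ≤ k) :
    IsKHoleFree G k ↔ IsKHoleFree (utterGraph G) k := by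
  constructor
  · intro h N hH
    obtain ⟨m, hm, hHm⟩ := utter_hole_to_hole hH.1 hH
    have := h m hHm
    omega
  · intro h N hH
    exact h N (hole_to_utter_hole hH)
end

section
/- A simple graph G is a split graph if and only if its utter graph u(G) is a split graph. -/
open SimpleGraph

universe u

variable {V : Type u}

/-- A split graph: the vertex set can be partitioned into a clique and a stable set. -/
def IsSplit (G : SimpleGraph V) : Prop :=
  ∃ K S : Set V, G.IsClique K ∧ IsStableSet G S ∧ K ∪ S = Set.univ ∧ Disjoint K S

/-- A graph is a split graph iff its utter graph is a split graph. -/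
theorem split_iff_utter_split {V : Type u} (G : SimpleGraph V) :
    IsSplit G ↔ IsSplit (utterGraph G) := by
  constructor
  · rintro ⟨K, S, hK, hS, hcov, hdisj⟩
    have hmem : ∀ x : V, x ∈ K ∨ x ∈ S := by
      intro x
      have : x ∈ K ∪ S := hcov ▸ Set.mem_univ x
      exact this
    have hedge : ∀ e : G.edgeSet, ∃ a ∈ K, a ∈ (e : Sym2 V) := by
      rintro ⟨e, he⟩
      induction e using Sym2.ind with
      | _ a b =>
        rw [SimpleGraph.mem_edgeSet] at he
        by_cases ha : a ∈ K
        · exact ⟨a, ha, Sym2.mem_mk_left a b⟩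
        · have haS : a ∈ S := (hmem a).resolve_left ha
          have hbK : b ∈ K := by
            by_contra hb
            exact hS a haS b ((hmem b).resolve_left hb) he
          exact ⟨b, hbK, Sym2.mem_mk_right a b⟩
    refine ⟨Sum.inl '' K ∪ Set.range Sum.inr, Sum.inl '' S, ?_, ?_, ?_, ?_⟩
    · rintro x hx y hy hne
      rcases hx with ⟨a, ha, rfl⟩ | ⟨e, rfl⟩ <;> rcases hy with ⟨b, hb, rfl⟩ | ⟨f, rfl⟩
      · exact hK ha hb (fun h => hne (congrArg _ h))
      · obtain ⟨c, hcK, hcf⟩ := hedge f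
        show a ∈ (f : Sym2 V) ∨ _
        by_cases hac : a = c
        · exact Or.inl (hac ▸ hcf)
        · exact Or.inr ⟨c, hcf, hK ha hcK hac⟩
      · obtain ⟨c, hcK, hce⟩ := hedge e
        show b ∈ (e : Sym2 V) ∨ _
        by_cases hbc : b = c
        · exact Or.inl (hbc ▸ hce)
        · exact Or.inr ⟨c, hce, hK hb hcK hbc⟩
      · refine ⟨fun h => hne (congrArg _ h), ?_⟩
        obtain ⟨a, haK, hae⟩ := hedge e
        obtain ⟨b, hbK, hbf⟩ := hedge f
        by_cases hab : a = b
        · exact Or.inl ⟨a, hae, hab ▸ hbf⟩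
        · exact Or.inr ⟨a, hae, b, hbf, hK haK hbK hab⟩
    · rintro x ⟨a, ha, rfl⟩ y ⟨b, hb, rfl⟩ h
      exact hS a ha b hb h
    · ext z
      simp only [Set.mem_union, Set.mem_image, Set.mem_range, Set.mem_univ, iff_true]
      rcases z with x | e
      · rcases hmem x with h | h
        · exact Or.inl (Or.inl ⟨x, h, rfl⟩)
        · exact Or.inr ⟨x, h, rfl⟩
      · exact Or.inl (Or.inr ⟨e, rfl⟩)
    · rw [Set.disjoint_left]
      rintro z (⟨a, ha, rfl⟩ | ⟨e, rfl⟩) ⟨b, hb, heq⟩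
      · obtain rfl : a = b := Sum.inl.inj heq.symm
        exact hdisj.le_bot ⟨ha, hb⟩
      · exact Sum.inl_ne_inr heq
  · rintro ⟨K, S, hK, hS, hcov, hdisj⟩
    refine ⟨Sum.inl ⁻¹' K, Sum.inl ⁻¹' S, ?_, ?_, ?_, ?_⟩
    · intro x hx y hy hne
      exact hK hx hy (fun h => hne (Sum.inl.inj h))
    · intro x hx y hy h
      exact hS _ hx _ hy h
    · ext x
      simp only [Set.mem_union, Set.mem_preimage, Set.mem_univ, iff_true]
      have : Sum.inl x ∈ K ∪ S := hcov ▸ Set.mem_univ _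
      exact this
    · rw [Set.disjoint_left]
      intro x hx hx'
      exact hdisj.le_bot ⟨hx, hx'⟩
end

section
/- A finite simple graph G is an interval graph if and only if its utter graph u(G) is an interval graph. -/
open SimpleGraph

universe u

variable {V : Type u}

/-- An interval graph: a graph isomorphic to the intersection graph of a family of
intervals of a linear order, i.e. the vertices can be assigned intervals so that two
distinct vertices are adjacent iff their intervals intersect. -/
def IsIntervalGraph (G : SimpleGraph V) : Prop :=
  ∃ (α : Type u) (_ : LinearOrder α) (I : V → Set α),
    (∀ x, (I x).OrdConnected) ∧
    ∀ x y : V, G.Adj x y ↔ (x ≠ y ∧ (I x ∩ I y).Nonempty)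

private lemma union_ordConn {α : Type*} [LinearOrder α] {s t : Set α}
    (hs : s.OrdConnected) (ht : t.OrdConnected) (h : (s ∩ t).Nonempty) :
    (s ∪ t).OrdConnected := by
  obtain ⟨p, hps, hpt⟩ := h
  constructor
  rintro x (hx | hx) y (hy | hy) z hz
  · exact Or.inl (hs.out hx hy hz)
  · rcases le_total z p with h1 | h1
    · exact Or.inl (hs.out hx hps ⟨hz.1, h1⟩)
    · exact Or.inr (ht.out hpt hy ⟨h1, hz.2⟩)
  · rcases le_total z p with h1 | h1
    · exact Or.inr (ht.out hx hpt ⟨hz.1, h1⟩)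
    · exact Or.inl (hs.out hps hy ⟨h1, hz.2⟩)
  · exact Or.inr (ht.out hx hy hz)

private lemma inter_nonempty_iff {V : Type u} {α : Type*} [LinearOrder α]
    {I : V → Set α} {G : SimpleGraph V}
    (hadj : ∀ x y, G.Adj x y ↔ x ≠ y ∧ (I x ∩ I y).Nonempty)
    {a : V} (ha : (I a).Nonempty) (x : V) :
    (I x ∩ I a).Nonempty ↔ (x = a ∨ G.Adj x a) := by
  constructor
  · intro h
    by_cases hx : x = a
    · exact Or.inl hx
    · exact Or.inr ((hadj x a).2 ⟨hx, h⟩)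
  · rintro (rfl | h)
    · obtain ⟨p, hp⟩ := ha
      exact ⟨p, hp, hp⟩
    · exact ((hadj x a).1 h).2

/-- A finite graph is an interval graph iff its utter graph is an
interval graph. -/
theorem interval_iff_utter_interval {V : Type u} [Fintype V] (G : SimpleGraph V) :
    IsIntervalGraph G ↔ IsIntervalGraph (utterGraph G) := by
  constructor
  · rintro ⟨α, inst, I, hord, hadj⟩
    have hset : ∀ (a b : V), {t | ∃ x ∈ (s(a, b) : Sym2 V), t ∈ I x} = I a ∪ I b := by
      intro a b
      ext t
      simp only [Sym2.mem_iff, Set.mem_setOf_eq, Set.mem_union]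
      constructor
      · rintro ⟨x, (rfl | rfl), hx⟩
        · exact Or.inl hx
        · exact Or.inr hx
      · rintro (h | h)
        · exact ⟨a, Or.inl rfl, h⟩
        · exact ⟨b, Or.inr rfl, h⟩
    let J : V ⊕ G.edgeSet → Set α :=
      Sum.elim I (fun e => {t | ∃ x ∈ (e.1 : Sym2 V), t ∈ I x})
    have hJ : ∀ (a b : V) (h : s(a, b) ∈ G.edgeSet),
        J (Sum.inr ⟨s(a, b), h⟩) = I a ∪ I b := fun a b h => hset a b
    have hJl : ∀ x : V, J (Sum.inl x) = I x := fun x => rfl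
    refine ⟨α, inst, J, ?_, ?_⟩
    · rintro (x | ⟨e, he⟩)
      · exact hord x
      · revert he
        induction e using Sym2.ind with
        | _ a b =>
          intro he
          have hab : G.Adj a b := he
          have hI : (I a ∩ I b).Nonempty := ((hadj a b).1 hab).2
          show Set.OrdConnected (J (Sum.inr ⟨s(a, b), he⟩))
          rw [hJ a b he]
          exact union_ordConn (hord a) (hord b) hI
    · have key : ∀ (x a b : V), G.Adj a b →
          ((I x ∩ (I a ∪ I b)).Nonempty ↔ ((x = a ∨ x = b) ∨ (G.Adj x a ∨ G.Adj x b))) := by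
        intro x a b hab
        have hIab : (I a ∩ I b).Nonempty := ((hadj a b).1 hab).2
        have ha : (I a).Nonempty := hIab.mono Set.inter_subset_left |>.mono (le_refl _)
        have hb : (I b).Nonempty := ⟨hIab.choose, hIab.choose_spec.2⟩
        rw [Set.inter_union_distrib_left, Set.union_nonempty,
          inter_nonempty_iff hadj ⟨hIab.choose, hIab.choose_spec.1⟩ x,
          inter_nonempty_iff hadj hb x]
        tauto
      rintro (x | ⟨e, he⟩) (y | ⟨f, hf⟩)
      · refine (show (utterGraph G).Adj (Sum.inl x) (Sum.inl y) ↔ G.Adj x y from Iff.rfl).trans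
          ((hadj x y).trans ?_)
        rw [hJl x, hJl y]
        simp
      · revert hf
        induction f using Sym2.ind with
        | _ c d =>
          intro hf
          have hcd : G.Adj c d := hf
          show (x ∈ (s(c, d) : Sym2 V) ∨ ∃ y ∈ (s(c, d) : Sym2 V), G.Adj x y) ↔ _
          rw [hJl x, hJ c d hf]
          simp only [Sym2.mem_iff, ne_eq, reduceCtorEq, not_false_eq_true, true_and]
          rw [key x c d hcd]
          constructor
          · rintro (h | ⟨y, (rfl | rfl), h⟩)
            · exact Or.inl h
            · exact Or.inr (Or.inl h)
            · exact Or.inr (Or.inr h)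
          · rintro ((h | h) | (h | h))
            · exact Or.inl (Or.inl h)
            · exact Or.inl (Or.inr h)
            · exact Or.inr ⟨c, Or.inl rfl, h⟩
            · exact Or.inr ⟨d, Or.inr rfl, h⟩
      · revert he
        induction e using Sym2.ind with
        | _ a b =>
          intro he
          have hab : G.Adj a b := he
          show (y ∈ (s(a, b) : Sym2 V) ∨ ∃ z ∈ (s(a, b) : Sym2 V), G.Adj y z) ↔ _
          rw [hJ a b he, hJl y]
          simp only [Sym2.mem_iff, ne_eq, reduceCtorEq, not_false_eq_true, true_and]
          rw [Set.inter_comm, key y a b hab]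
          constructor
          · rintro (h | ⟨z, (rfl | rfl), h⟩)
            · exact Or.inl h
            · exact Or.inr (Or.inl h)
            · exact Or.inr (Or.inr h)
          · rintro ((h | h) | (h | h))
            · exact Or.inl (Or.inl h)
            · exact Or.inl (Or.inr h)
            · exact Or.inr ⟨a, Or.inl rfl, h⟩
            · exact Or.inr ⟨b, Or.inr rfl, h⟩
      · revert he
        induction e using Sym2.ind with
        | _ a b =>
          intro he
          revert hf
          induction f using Sym2.ind with
          | _ c d =>
            intro hf
            have hab : G.Adj a b := he
            have hcd : G.Adj c d := hf
            show ((⟨s(a,b), he⟩ : G.edgeSet) ≠ ⟨s(c,d), hf⟩ ∧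
              ((∃ x, x ∈ (s(a,b) : Sym2 V) ∧ x ∈ (s(c,d) : Sym2 V)) ∨
                ∃ x ∈ (s(a,b) : Sym2 V), ∃ y ∈ (s(c,d) : Sym2 V), G.Adj x y)) ↔ _
            rw [hJ a b he, hJ c d hf]
            have hne : ((⟨s(a,b), he⟩ : G.edgeSet) ≠ ⟨s(c,d), hf⟩) ↔
                ((Sum.inr ⟨s(a,b), he⟩ : V ⊕ G.edgeSet) ≠ Sum.inr ⟨s(c,d), hf⟩) := by
              simp
            rw [hne]
            refine and_congr Iff.rfl ?_
            rw [Set.union_inter_distrib_right, Set.union_nonempty,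
              key a c d hcd, key b c d hcd]
            constructor
            · rintro (⟨x, hx1, hx2⟩ | ⟨x, hx, y, hy, h⟩)
              · rw [Sym2.mem_iff] at hx1 hx2
                rcases hx1 with rfl | rfl <;> rcases hx2 with rfl | rfl
                · exact Or.inl (Or.inl (Or.inl rfl))
                · exact Or.inl (Or.inl (Or.inr rfl))
                · exact Or.inr (Or.inl (Or.inl rfl))
                · exact Or.inr (Or.inl (Or.inr rfl))
              · rw [Sym2.mem_iff] at hx hy
                rcases hx with rfl | rfl <;> rcases hy with rfl | rfl
                · exact Or.inl (Or.inr (Or.inl h))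
                · exact Or.inl (Or.inr (Or.inr h))
                · exact Or.inr (Or.inr (Or.inl h))
                · exact Or.inr (Or.inr (Or.inr h))
            · rintro (((rfl | rfl) | (h | h)) | ((rfl | rfl) | (h | h)))
              · exact Or.inl ⟨a, Sym2.mem_mk_left a b, Sym2.mem_mk_left a d⟩
              · exact Or.inl ⟨a, Sym2.mem_mk_left a b, Sym2.mem_mk_right c a⟩
              · exact Or.inr ⟨a, Sym2.mem_mk_left a b, c, Sym2.mem_mk_left c d, h⟩
              · exact Or.inr ⟨a, Sym2.mem_mk_left a b, d, Sym2.mem_mk_right c d, h⟩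
              · exact Or.inl ⟨b, Sym2.mem_mk_right a b, Sym2.mem_mk_left b d⟩
              · exact Or.inl ⟨b, Sym2.mem_mk_right a b, Sym2.mem_mk_right c b⟩
              · exact Or.inr ⟨b, Sym2.mem_mk_right a b, c, Sym2.mem_mk_left c d, h⟩
              · exact Or.inr ⟨b, Sym2.mem_mk_right a b, d, Sym2.mem_mk_right c d, h⟩
  · rintro ⟨α, inst, J, hord, hadj⟩
    refine ⟨α, inst, fun x => J (Sum.inl x), fun x => hord _, fun x y => ?_⟩
    have h := hadj (Sum.inl x) (Sum.inl y)
    exact (show G.Adj x y ↔ _ from h).trans (by simp)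
end

section
/- The cycle graph C6 on 6 vertices is perfect, but its utter graph u(C6) is not perfect; hence the class of perfect graphs is not stable under taking utter graphs. -/
open SimpleGraph

universe u

variable {V : Type u}

section Aux

open scoped Classical in
/-- The clique number is at most the chromatic number. -/
lemma cliqueNumber_le_chromaticNumber {W : Type*} (G : SimpleGraph W) :
    cliqueNumber G ≤ G.chromaticNumber :=
  iSup₂_le fun _ ht => ht.card_le_chromaticNumber

instance utterDecidable : DecidableRel (utterGraph (cycleGraph 6)).Adj := fun a b => by
  rcases a with x | e <;> rcases b with y | f
  · exact inferInstanceAs (Decidable ((cycleGraph 6).Adj x y))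
  · exact inferInstanceAs (Decidable (x ∈ (f : Sym2 (Fin 6)) ∨
      ∃ y ∈ (f : Sym2 (Fin 6)), (cycleGraph 6).Adj x y))
  · exact inferInstanceAs (Decidable (y ∈ (e : Sym2 (Fin 6)) ∨
      ∃ z ∈ (e : Sym2 (Fin 6)), (cycleGraph 6).Adj y z))
  · exact inferInstanceAs (Decidable (e ≠ f ∧
      ((∃ x, x ∈ (e : Sym2 (Fin 6)) ∧ x ∈ (f : Sym2 (Fin 6))) ∨
        ∃ x ∈ (e : Sym2 (Fin 6)), ∃ y ∈ (f : Sym2 (Fin 6)), (cycleGraph 6).Adj x y)))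

/-- The edge `45` of `C₆`. -/
def E45 : (cycleGraph 6).edgeSet := ⟨s(4, 5), ((cycleGraph 6).mem_edgeSet).mpr (by decide)⟩

/-- The vertex set of an induced `C₅` in the utter graph of `C₆`. -/
def S5 : Set (Fin 6 ⊕ (cycleGraph 6).edgeSet) :=
  {Sum.inl 0, Sum.inl 1, Sum.inl 2, Sum.inl 3, Sum.inr E45}

instance : DecidablePred (· ∈ S5) := fun a =>
  decidable_of_iff (a = Sum.inl 0 ∨ a = Sum.inl 1 ∨ a = Sum.inl 2 ∨ a = Sum.inl 3 ∨
    a = Sum.inr E45) (by simp [S5])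


def A0 : S5 := ⟨Sum.inl 0, by simp [S5]⟩
def A1 : S5 := ⟨Sum.inl 1, by simp [S5]⟩
def A2 : S5 := ⟨Sum.inl 2, by simp [S5]⟩
def A3 : S5 := ⟨Sum.inl 3, by simp [S5]⟩
def AE : S5 := ⟨Sum.inr E45, by simp [S5]⟩

end Aux

/-- The cycle `C₆` is perfect but its utter graph is not perfect;
hence perfect graphs are not stable under taking utter graphs. -/



theorem c6_perfect_utter_not_perfect :
    IsPerfect (cycleGraph 6) ∧ ¬IsPerfect (utterGraph (cycleGraph 6)) := by
  constructor
  · -- C₆ is perfect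
    intro s
    by_cases hE : ∃ a b : s, ((cycleGraph 6).induce s).Adj a b
    · obtain ⟨a, b, hab⟩ := hE
      classical
      have hne : a ≠ b := hab.ne
      have hclique : ((cycleGraph 6).induce s).IsClique (({a, b} : Finset s) : Set s) := by
        rw [Finset.coe_insert, Finset.coe_singleton]
        exact isClique_pair.mpr fun _ => hab
      have h2 : (2 : ℕ∞) ≤ cliqueNumber ((cycleGraph 6).induce s) := by
        refine le_iSup₂_of_le ({a, b} : Finset s) hclique ?_
        rw [Finset.card_pair hne]
        simp
      have hkey : ∀ x y : Fin 6, (cycleGraph 6).Adj x y → x.val % 2 ≠ y.val % 2 := by decide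
      have hcol : ((cycleGraph 6).induce s).Colorable 2 := by
        refine ⟨⟨fun v => ⟨v.1.val % 2, Nat.mod_lt _ two_pos⟩, ?_⟩⟩
        intro x y hxy hfe
        exact hkey x.1 y.1 hxy (congrArg Fin.val hfe)
      refine le_antisymm (le_trans ?_ h2) (cliqueNumber_le_chromaticNumber _)
      exact_mod_cast hcol.chromaticNumber_le
    · by_cases hne : Nonempty s
      · obtain ⟨v⟩ := hne
        classical
        have hclique : ((cycleGraph 6).induce s).IsClique (({v} : Finset s) : Set s) := by
          rw [Finset.coe_singleton]
          exact fun x hx y hy hxy => absurd (Set.eq_of_mem_singleton hx |>.trans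
            (Set.eq_of_mem_singleton hy).symm) hxy
        have h1 : (1 : ℕ∞) ≤ cliqueNumber ((cycleGraph 6).induce s) := by
          refine le_iSup₂_of_le ({v} : Finset s) hclique ?_
          simp
        have hcol : ((cycleGraph 6).induce s).Colorable 1 := by
          refine ⟨⟨fun _ => 0, ?_⟩⟩
          intro x y hxy _
          exact hE ⟨x, y, hxy⟩
        refine le_antisymm (le_trans ?_ h1) (cliqueNumber_le_chromaticNumber _)
        exact_mod_cast hcol.chromaticNumber_le
      · haveI : IsEmpty s := not_nonempty_iff.mp hne
        refine le_antisymm ?_ (cliqueNumber_le_chromaticNumber _)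
        rw [SimpleGraph.chromaticNumber_eq_zero_of_isEmpty]
        exact zero_le
  · -- u(C₆) is not perfect
    intro h
    have hs := h S5
    set H := utterGraph (cycleGraph 6) with hH
    -- no triangle in the induced C₅
    have hTri : ∀ a b c : S5, (H.induce S5).Adj a b → (H.induce S5).Adj a c →
        (H.induce S5).Adj b c → False := by decide
    have hclq : cliqueNumber (H.induce S5) ≤ 2 := by
      refine iSup₂_le fun t ht => ?_
      by_contra hc
      push_neg at hc
      have h3 : 2 < t.card := by exact_mod_cast hc
      obtain ⟨a, b, c, ha, hb, hc', hab, hac, hbc⟩ := Finset.two_lt_card_iff.mp h3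
      exact hTri a b c (ht (Finset.mem_coe.mpr ha) (Finset.mem_coe.mpr hb) hab)
        (ht (Finset.mem_coe.mpr ha) (Finset.mem_coe.mpr hc') hac)
        (ht (Finset.mem_coe.mpr hb) (Finset.mem_coe.mpr hc') hbc)
    -- the induced graph is a 5-cycle, hence not 2-colorable
    have h01 : (H.induce S5).Adj A0 A1 := by show H.Adj A0.1 A1.1; decide
    have h12 : (H.induce S5).Adj A1 A2 := by show H.Adj A1.1 A2.1; decide
    have h23 : (H.induce S5).Adj A2 A3 := by show H.Adj A2.1 A3.1; decide
    have h3E : (H.induce S5).Adj A3 AE := by show H.Adj A3.1 AE.1; decide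
    have hE0 : (H.induce S5).Adj AE A0 := by show H.Adj AE.1 A0.1; decide
    have hncol : ¬ (H.induce S5).Colorable 2 := by
      rintro ⟨C⟩
      have key : ∀ a b c : Fin 2, a ≠ b → b ≠ c → a = c := by decide
      have e02 : C A0 = C A2 := key _ _ _ (C.valid h01) (C.valid h12)
      have e2E : C A2 = C AE := key _ _ _ (C.valid h23) (C.valid h3E)
      exact C.valid hE0 ((e02.trans e2E).symm)
    have hchrom : (H.induce S5).chromaticNumber ≤ 2 := hs ▸ hclq
    have : (H.induce S5).Colorable 2 := by
      rw [← SimpleGraph.chromaticNumber_le_iff_colorable]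
      exact_mod_cast hchrom
    exact hncol this
end
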